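/- arXiv:1408.2043 — 10 statements merged into one kernel-verified Lean document; each statement's English description precedes it below -/
import Mathlib

section
/- Let k ∈ (0,1). For every integer n ≥ 1, the function u ↦ E(u,k)·cos u − sin u·√(1−k²sin²u) (which is the function f₁(p) = cn p·E(p) − sn p·dn p of the paper written in the Legendre variable u = am(p,k)) has exactly one zero in the open interval ((2n−1)π/2, (2n+1)π/2), and this zero lies in the subinterval (nπ, nπ + π/2). (Proposition on the roots p₁ⁿ(k) of f₁, expressed in Legendre form: p₁ⁿ(k) ∈ (2nK(k), (2n+1)K(k)).) -/
open Real

/-- Incomplete elliptic integral of the second kind in Legendre form: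
`E(u,k) = ∫₀ᵘ √(1 − k² sin² φ) dφ`. -/
noncomputable def EllE (u k : ℝ) : ℝ :=
  ∫ φ in (0:ℝ)..u, Real.sqrt (1 - k ^ 2 * Real.sin φ ^ 2)

lemma f1_arg_pos {k : ℝ} (hk : k ∈ Set.Ioo (0:ℝ) 1) (t : ℝ) :
    0 < 1 - k ^ 2 * Real.sin t ^ 2 := by
  nlinarith [sin_sq_le_one t, hk.1, hk.2, sq_nonneg (Real.sin t), sq_nonneg k]

lemma f1_integrand_cont (k : ℝ) :
    Continuous fun φ : ℝ => Real.sqrt (1 - k ^ 2 * Real.sin φ ^ 2) := by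
  fun_prop

lemma f1_integrand_le_one (k t : ℝ) : Real.sqrt (1 - k ^ 2 * Real.sin t ^ 2) ≤ 1 := by
  calc Real.sqrt (1 - k ^ 2 * Real.sin t ^ 2) ≤ Real.sqrt 1 :=
        Real.sqrt_le_sqrt (by nlinarith [sq_nonneg (k * Real.sin t)])
    _ = 1 := Real.sqrt_one

lemma f1_hasDerivAt_EllE (k u : ℝ) :
    HasDerivAt (fun u => EllE u k) (Real.sqrt (1 - k ^ 2 * Real.sin u ^ 2)) u :=
  ((f1_integrand_cont k).integral_hasStrictDerivAt 0 u).hasDerivAt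

lemma f1_abs_EllE_le (k t : ℝ) : |EllE t k| ≤ |t| := by
  have := intervalIntegral.norm_integral_le_of_norm_le_const (C := 1)
    (f := fun φ : ℝ => Real.sqrt (1 - k ^ 2 * Real.sin φ ^ 2)) (a := 0) (b := t) ?_
  · simpa [EllE] using this
  · intro x _
    rw [Real.norm_eq_abs, abs_of_nonneg (Real.sqrt_nonneg _)]
    exact f1_integrand_le_one k x

lemma f1_EllE_nonneg {k t : ℝ} (ht : 0 ≤ t) : 0 ≤ EllE t k := by
  apply intervalIntegral.integral_nonneg ht
  intro x _; positivity

lemma f1_one_le_E1 {k : ℝ} (hk : k ∈ Set.Ioo (0:ℝ) 1) : 1 ≤ EllE (π/2) k := by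
  have h : ∫ φ in (0:ℝ)..(π/2), Real.cos φ ≤ EllE (π/2) k := by
    apply intervalIntegral.integral_mono_on (by positivity)
      (Real.continuous_cos.intervalIntegrable _ _)
      ((f1_integrand_cont k).intervalIntegrable _ _)
    intro x hx
    have hc : 0 ≤ Real.cos x := Real.cos_nonneg_of_mem_Icc
      ⟨by linarith [hx.1, Real.pi_pos], hx.2⟩
    rw [show Real.cos x = Real.sqrt (Real.cos x ^ 2) by rw [Real.sqrt_sq hc]]
    apply Real.sqrt_le_sqrt
    have := Real.sin_sq_add_cos_sq x
    nlinarith [mul_nonneg (by nlinarith [hk.1.le, hk.2.le] : (0:ℝ) ≤ 1 - k^2)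
      (sq_nonneg (Real.sin x))]
  simpa using h

lemma f1_integrand_per (k : ℝ) :
    Function.Periodic (fun φ : ℝ => Real.sqrt (1 - k ^ 2 * Real.sin φ ^ 2)) π := by
  intro x; simp [Real.sin_add_pi]

lemma f1_integral_pi (k : ℝ) :
    ∫ φ in (0:ℝ)..π, Real.sqrt (1 - k ^ 2 * Real.sin φ ^ 2) = 2 * EllE (π/2) k := by
  have cont := f1_integrand_cont k
  have h1 := intervalIntegral.integral_add_adjacent_intervals
    (a := 0) (b := π/2) (c := π) (μ := MeasureTheory.volume)
    (cont.intervalIntegrable _ _) (cont.intervalIntegrable _ _)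
  have h2 := intervalIntegral.integral_comp_sub_left (a := (0:ℝ)) (b := π/2)
    (fun φ : ℝ => Real.sqrt (1 - k ^ 2 * Real.sin φ ^ 2)) π
  simp only [Real.sin_pi_sub] at h2
  rw [show π - π/2 = π/2 by ring, show π - 0 = π by ring] at h2
  rw [← h1, ← h2]
  unfold EllE; ring

lemma f1_EllE_shift (k t : ℝ) (n : ℕ) :
    EllE ((n:ℝ) * π + t) k = 2 * n * EllE (π/2) k + EllE t k := by
  have cont := f1_integrand_cont k
  have hint : ∀ a b : ℝ, IntervalIntegrable
      (fun φ : ℝ => Real.sqrt (1 - k ^ 2 * Real.sin φ ^ 2)) MeasureTheory.volume a b :=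
    fun a b => cont.intervalIntegrable _ _
  have h1 := (f1_integrand_per k).intervalIntegral_add_zsmul_eq (n : ℤ) t hint
  have h2 := (f1_integrand_per k).intervalIntegral_add_eq t 0
  have h3 := intervalIntegral.integral_add_adjacent_intervals
    (a := (0:ℝ)) (b := t) (c := t + (n:ℤ) • π) (hint _ _) (hint _ _)
  have hπ := f1_integral_pi k
  rw [h2] at h1
  rw [h1] at h3
  unfold EllE at hπ ⊢
  rw [show (n:ℝ) * π + t = t + (n:ℤ) • π by simp [zsmul_eq_mul]; ring, ← h3, zero_add, hπ,
    zsmul_eq_mul]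
  push_cast; ring

lemma f1_cos_shift (t : ℝ) (n : ℕ) : Real.cos ((n:ℝ) * π + t) = (-1)^n * Real.cos t := by
  rw [Real.cos_add]
  have h := Real.cos_nat_mul_pi_sub 0 n
  simp at h
  simp [h, Real.sin_nat_mul_pi]

lemma f1_sin_shift (t : ℝ) (n : ℕ) : Real.sin ((n:ℝ) * π + t) = (-1)^n * Real.sin t := by
  rw [Real.sin_add]
  have h := Real.cos_nat_mul_pi_sub 0 n
  simp at h
  simp [h, Real.sin_nat_mul_pi]

lemma f1_sinsq_shift (t : ℝ) (n : ℕ) : Real.sin ((n:ℝ) * π + t) ^ 2 = Real.sin t ^ 2 := by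
  rw [f1_sin_shift]; rw [mul_pow, ← pow_mul, pow_mul']; simp

lemma f1_g_hasDerivAt {k : ℝ} (hk : k ∈ Set.Ioo (0:ℝ) 1) (C t : ℝ) :
    HasDerivAt (fun t => (C + EllE t k) * Real.cos t -
      Real.sin t * Real.sqrt (1 - k ^ 2 * Real.sin t ^ 2))
      (-(Real.sin t * ((C + EllE t k) -
        k ^ 2 * Real.sin t * Real.cos t / Real.sqrt (1 - k ^ 2 * Real.sin t ^ 2)))) t := by
  have hd : (0:ℝ) < Real.sqrt (1 - k ^ 2 * Real.sin t ^ 2) := Real.sqrt_pos.2 (f1_arg_pos hk t)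
  have hE : HasDerivAt (fun t => C + EllE t k)
      (Real.sqrt (1 - k ^ 2 * Real.sin t ^ 2)) t := (f1_hasDerivAt_EllE k t).const_add C
  have h1 := hE.mul (Real.hasDerivAt_cos t)
  have hinner : HasDerivAt (fun t : ℝ => 1 - k ^ 2 * Real.sin t ^ 2)
      (-(k ^ 2 * (2 * Real.sin t ^ 1 * Real.cos t))) t :=
    HasDerivAt.const_sub 1 (((Real.hasDerivAt_sin t).pow 2).const_mul (k ^ 2))
  have hsqrt := hinner.sqrt (ne_of_gt (f1_arg_pos hk t))
  have h2 := (Real.hasDerivAt_sin t).mul hsqrt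
  have h := h1.sub h2
  convert h using 1
  · rfl
  · rfl
  · rfl
  field_simp
  ring_nf
  field_simp
  ring

/-- The key ratio bound: `k² sin t cos t / √(1 − k² sin² t) < 1` for `t ∈ (0, π/2)`. -/
lemma f1_ratio_lt_one {k : ℝ} (hk : k ∈ Set.Ioo (0:ℝ) 1) {t : ℝ}
    (ht : t ∈ Set.Ioo (0:ℝ) (π/2)) :
    k ^ 2 * Real.sin t * Real.cos t / Real.sqrt (1 - k ^ 2 * Real.sin t ^ 2) < 1 := by
  have hd : (0:ℝ) < Real.sqrt (1 - k ^ 2 * Real.sin t ^ 2) := Real.sqrt_pos.2 (f1_arg_pos hk t)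
  have hs : 0 < Real.sin t := Real.sin_pos_of_pos_of_lt_pi ht.1 (by linarith [Real.pi_pos, ht.2])
  have hc : 0 < Real.cos t := Real.cos_pos_of_mem_Ioo ⟨by linarith [Real.pi_pos, ht.1], ht.2⟩
  rw [div_lt_one hd]
  have hd2 : Real.sqrt (1 - k ^ 2 * Real.sin t ^ 2) ^ 2 = 1 - k ^ 2 * Real.sin t ^ 2 :=
    Real.sq_sqrt (f1_arg_pos hk t).le
  have hpyth := Real.sin_sq_add_cos_sq t
  have hs1 : Real.sin t ^ 2 ≤ 1 := sin_sq_le_one t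
  have hk2 : k ^ 2 < 1 := by nlinarith [hk.1, hk.2]
  have e1 : 0 ≤ (1 - Real.sin t ^ 2) * (1 - k ^ 4 * Real.sin t ^ 2) := by
    apply mul_nonneg (by linarith)
    nlinarith [sq_nonneg (Real.sin t), sq_nonneg (k ^ 2 * Real.sin t), hk.1]
  have e2 : 0 < Real.sin t ^ 2 * (1 - k ^ 2) := by
    apply mul_pos (by positivity) (by linarith)
  have hsq : (k ^ 2 * Real.sin t * Real.cos t) ^ 2 <
      Real.sqrt (1 - k ^ 2 * Real.sin t ^ 2) ^ 2 := by
    have hc2 : Real.cos t ^ 2 = 1 - Real.sin t ^ 2 := by linarith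
    have key : (k ^ 2 * Real.sin t * Real.cos t) ^ 2 =
        k ^ 4 * Real.sin t ^ 2 * (1 - Real.sin t ^ 2) := by
      rw [mul_pow, mul_pow, hc2]; ring
    rw [hd2, key]
    nlinarith [e1, e2]
  exact lt_of_pow_lt_pow_left₀ 2 hd.le hsq

/-- For `k ∈ (0,1)` and every integer `n ≥ 1`, the function
`u ↦ E(u,k)·cos u − sin u·√(1 − k² sin² u)` (the function `f₁` of the paper in the
Legendre variable) has exactly one zero in `((2n−1)π/2, (2n+1)π/2)`, and this zero
lies in `(nπ, nπ + π/2)`. -/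
theorem f1_unique_root (k : ℝ) (hk : k ∈ Set.Ioo (0:ℝ) 1) (n : ℕ) (hn : 1 ≤ n) :
    (∃! u : ℝ, u ∈ Set.Ioo ((2 * (n:ℝ) - 1) * π / 2) ((2 * (n:ℝ) + 1) * π / 2) ∧
      EllE u k * Real.cos u - Real.sin u * Real.sqrt (1 - k ^ 2 * Real.sin u ^ 2) = 0) ∧
    (∀ u : ℝ, u ∈ Set.Ioo ((2 * (n:ℝ) - 1) * π / 2) ((2 * (n:ℝ) + 1) * π / 2) →
      EllE u k * Real.cos u - Real.sin u * Real.sqrt (1 - k ^ 2 * Real.sin u ^ 2) = 0 →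
      u ∈ Set.Ioo ((n:ℝ) * π) ((n:ℝ) * π + π / 2)) := by
  have hπ := Real.pi_pos
  have hπ4 : π < 4 := by linarith [Real.pi_lt_d2]
  set C : ℝ := 2 * (n:ℝ) * EllE (π/2) k with hCdef
  have hn1 : (1:ℝ) ≤ (n:ℝ) := by exact_mod_cast hn
  have hE1 : 1 ≤ EllE (π/2) k := f1_one_le_E1 hk
  have hC : 2 ≤ C := by
    have : (2:ℝ) * 1 * 1 ≤ 2 * (n:ℝ) * EllE (π/2) k := by
      apply mul_le_mul (by nlinarith) hE1 (by norm_num) (by positivity)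
    linarith
  set g : ℝ → ℝ := fun t => (C + EllE t k) * Real.cos t -
    Real.sin t * Real.sqrt (1 - k ^ 2 * Real.sin t ^ 2) with hgdef
  -- continuity
  have hgc : Continuous g :=
    continuous_iff_continuousAt.mpr fun t => (f1_g_hasDerivAt hk C t).differentiableAt.continuousAt
  -- strict antitonicity on [0, π/2]
  have hanti : StrictAntiOn g (Set.Icc 0 (π/2)) := by
    apply strictAntiOn_of_deriv_neg (convex_Icc _ _) hgc.continuousOn
    intro t ht
    rw [interior_Icc] at ht
    rw [(f1_g_hasDerivAt hk C t).deriv]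
    have hs : 0 < Real.sin t := Real.sin_pos_of_pos_of_lt_pi ht.1 (by linarith [ht.2])
    have hEt : 0 ≤ EllE t k := f1_EllE_nonneg ht.1.le
    have hr := f1_ratio_lt_one hk ht
    have hbr : 0 < (C + EllE t k) -
        k ^ 2 * Real.sin t * Real.cos t / Real.sqrt (1 - k ^ 2 * Real.sin t ^ 2) := by
      linarith
    nlinarith [mul_pos hs hbr]
  -- positivity on (−π/2, 0]
  have hpos : ∀ t ∈ Set.Ioc (-(π/2)) 0, 0 < g t := by
    intro t ht
    have hc : 0 < Real.cos t := Real.cos_pos_of_mem_Ioo ⟨ht.1, by linarith [ht.2]⟩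
    have habs : |EllE t k| ≤ |t| := f1_abs_EllE_le k t
    have htabs : |t| ≤ π/2 := by
      rw [abs_le]; constructor <;> linarith [ht.1.le, ht.2]
    have hEt : -(π/2) ≤ EllE t k := by
      have := (abs_le.mp (habs.trans htabs)).1
      linarith
    have hA : 0 < C + EllE t k := by linarith
    have hsin : Real.sin t ≤ 0 :=
      Real.sin_nonpos_of_nonpos_of_neg_pi_le ht.2 (by linarith [ht.1.le])
    have hsqrt : 0 ≤ Real.sqrt (1 - k ^ 2 * Real.sin t ^ 2) := Real.sqrt_nonneg _
    have : 0 ≤ -Real.sin t * Real.sqrt (1 - k ^ 2 * Real.sin t ^ 2) := by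
      apply mul_nonneg (by linarith) hsqrt
    have := mul_pos hA hc
    simp only [hgdef]
    nlinarith
  -- values at the endpoints
  have hg0 : g 0 = C := by
    simp [hgdef, EllE, intervalIntegral.integral_same]
  have hgh : g (π/2) < 0 := by
    have : g (π/2) = -Real.sqrt (1 - k ^ 2) := by
      simp [hgdef, Real.cos_pi_div_two, Real.sin_pi_div_two]
    rw [this]
    simp only [neg_neg, Left.neg_neg_iff]
    apply Real.sqrt_pos.2
    nlinarith [hk.1, hk.2]
  -- existence of a zero of g in (0, π/2)
  have hiv : (0:ℝ) ∈ Set.Ioo (g (π/2)) (g 0) := ⟨hgh, by rw [hg0]; linarith⟩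
  obtain ⟨t₀, ht₀mem, ht₀⟩ := intermediate_value_Ioo' (by positivity : (0:ℝ) ≤ π/2)
    hgc.continuousOn hiv
  -- the relation between f and g
  have hfrel : ∀ t : ℝ,
      EllE ((n:ℝ) * π + t) k * Real.cos ((n:ℝ) * π + t) -
        Real.sin ((n:ℝ) * π + t) * Real.sqrt (1 - k ^ 2 * Real.sin ((n:ℝ) * π + t) ^ 2) =
      (-1)^n * g t := by
    intro t
    rw [f1_EllE_shift, f1_cos_shift, f1_sinsq_shift, f1_sin_shift, ← hCdef]
    simp only [hgdef]
    ring
  -- zeros of g in (−π/2, π/2) lie in (0, π/2) and equal t₀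
  have huniq : ∀ t ∈ Set.Ioo (-(π/2)) (π/2), g t = 0 → t ∈ Set.Ioo (0:ℝ) (π/2) ∧ t = t₀ := by
    intro t ht hz
    have ht0 : 0 < t := by
      by_contra h
      push_neg at h
      exact absurd hz (ne_of_gt (hpos t ⟨ht.1, h⟩))
    refine ⟨⟨ht0, ht.2⟩, ?_⟩
    apply hanti.injOn (Set.mem_Icc.2 ⟨ht0.le, ht.2.le⟩)
      (Set.mem_Icc.2 ⟨ht₀mem.1.le, ht₀mem.2.le⟩)
    rw [hz, ht₀]
  -- translate between u and t
  have hmemiff : ∀ u : ℝ,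
      u ∈ Set.Ioo ((2 * (n:ℝ) - 1) * π / 2) ((2 * (n:ℝ) + 1) * π / 2) ↔
      u - (n:ℝ) * π ∈ Set.Ioo (-(π/2)) (π/2) := by
    intro u
    constructor
    · rintro ⟨h1, h2⟩
      exact ⟨by linarith, by linarith⟩
    · rintro ⟨h1, h2⟩
      simp only [Set.mem_Ioo, neg_lt] at *
      constructor <;> linarith
  have hfg : ∀ u : ℝ,
      EllE u k * Real.cos u - Real.sin u * Real.sqrt (1 - k ^ 2 * Real.sin u ^ 2) =
        (-1)^n * g (u - (n:ℝ) * π) := by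
    intro u
    have := hfrel (u - (n:ℝ) * π)
    rw [show (n:ℝ) * π + (u - (n:ℝ) * π) = u by ring] at this
    exact this
  have hpow : ((-1:ℝ))^n ≠ 0 := by
    apply pow_ne_zero; norm_num
  -- the zero u₀
  set u₀ : ℝ := (n:ℝ) * π + t₀ with hu₀
  have hu₀mem : u₀ ∈ Set.Ioo ((2 * (n:ℝ) - 1) * π / 2) ((2 * (n:ℝ) + 1) * π / 2) := by
    constructor <;> simp only [hu₀] <;> nlinarith [ht₀mem.1, ht₀mem.2]
  have hu₀zero : EllE u₀ k * Real.cos u₀ - Real.sin u₀ *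
      Real.sqrt (1 - k ^ 2 * Real.sin u₀ ^ 2) = 0 := by
    rw [hfg u₀, show u₀ - (n:ℝ) * π = t₀ by rw [hu₀]; ring, ht₀, mul_zero]
  constructor
  · refine ⟨u₀, ⟨hu₀mem, hu₀zero⟩, ?_⟩
    rintro u ⟨humem, huzero⟩
    rw [hfg u] at huzero
    have hz : g (u - (n:ℝ) * π) = 0 := by
      rcases mul_eq_zero.mp huzero with h | h
      · exact absurd h hpow
      · exact h
    have := (huniq _ ((hmemiff u).mp humem) hz).2
    have : u - (n:ℝ) * π = t₀ := this
    simp only [hu₀]; linarith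
  · intro u humem huzero
    rw [hfg u] at huzero
    have hz : g (u - (n:ℝ) * π) = 0 := by
      rcases mul_eq_zero.mp huzero with h | h
      · exact absurd h hpow
      · exact h
    have hmem := (huniq _ ((hmemiff u).mp humem) hz).1
    constructor <;> [linarith [hmem.1]; linarith [hmem.2]]
end

section
/- For every k ∈ (0,1) and every u > 0, one has √(1−k²sin²u)·E(u,k) > k²·sin u·cos u. (The function f₂(p) = dn p·E(p) − k² sn p·cn p is positive for all p > 0 and k ∈ (0,1), written in the Legendre variable u = am(p,k).) -/
open Real

/-- Key algebraic identity for the derivative computation. -/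
lemma f2_aux (e S s c : ℝ) (hS0 : S ≠ 0) (hS2 : S ^ 2 = 1 - e * s ^ 2)
    (hp : s ^ 2 + c ^ 2 = 1) :
    (1 - e) / S ^ 3 =
      S - ((e * c * c + e * s * -s) * S - e * s * c * (-(e * (2 * s * c)) / (2 * S))) / S ^ 2 := by
  have hc : c ^ 2 = 1 - s ^ 2 := by linarith
  have h3 : S ^ 3 = S * (1 - e * s ^ 2) := by rw [pow_succ, hS2]; ring
  have h4 : S ^ 4 = (1 - e * s ^ 2) ^ 2 := by rw [show (4:ℕ) = 2*2 from rfl, pow_mul, hS2]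
  have h5 : S ^ 5 = S * (1 - e * s ^ 2) ^ 2 := by
    rw [show (5:ℕ) = 4+1 from rfl, pow_succ, h4]; ring
  have h6 : S ^ 6 = (1 - e * s ^ 2) ^ 3 := by
    rw [show (6:ℕ) = 2*3 from rfl, pow_mul, hS2]
  have h7 : S ^ 7 = S * (1 - e * s ^ 2) ^ 3 := by
    rw [show (7:ℕ) = 6+1 from rfl, pow_succ, h6]; ring
  field_simp
  ring_nf
  simp only [h7, h6, h5, h4, h3, hS2, hc]
  ring

/-- For every `k ∈ (0,1)` and every `u > 0`:
`√(1 − k² sin² u) · E(u,k) > k² · sin u · cos u`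
(the function `f₂` of the paper is positive, in the Legendre variable). -/
theorem f2_positive (k u : ℝ) (hk : k ∈ Set.Ioo (0:ℝ) 1) (hu : 0 < u) :
    Real.sqrt (1 - k ^ 2 * Real.sin u ^ 2) * EllE u k > k ^ 2 * Real.sin u * Real.cos u := by
  obtain ⟨hk0, hk1⟩ := hk
  have hk2 : k ^ 2 < 1 := by nlinarith
  have hk2p : 0 < k ^ 2 := by positivity
  have hDpos : ∀ φ : ℝ, 0 < 1 - k ^ 2 * Real.sin φ ^ 2 := by
    intro φ
    nlinarith [Real.sin_sq_le_one φ]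
  have hSpos : ∀ φ : ℝ, 0 < Real.sqrt (1 - k ^ 2 * Real.sin φ ^ 2) :=
    fun φ => Real.sqrt_pos.2 (hDpos φ)
  have hcont : Continuous (fun φ : ℝ => Real.sqrt (1 - k ^ 2 * Real.sin φ ^ 2)) := by
    continuity
  set g : ℝ → ℝ := fun φ => k ^ 2 * Real.sin φ * Real.cos φ /
      Real.sqrt (1 - k ^ 2 * Real.sin φ ^ 2) with hg
  set f : ℝ → ℝ := fun v => EllE v k - g v with hf
  have hderiv : ∀ v : ℝ, HasDerivAt f
      ((1 - k ^ 2) / Real.sqrt (1 - k ^ 2 * Real.sin v ^ 2) ^ 3) v := by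
    intro v
    have hE : HasDerivAt (fun w => EllE w k)
        (Real.sqrt (1 - k ^ 2 * Real.sin v ^ 2)) v := by
      have h1 : IntervalIntegrable (fun φ : ℝ => Real.sqrt (1 - k ^ 2 * Real.sin φ ^ 2))
          MeasureTheory.volume 0 v := hcont.intervalIntegrable 0 v
      have h2 : StronglyMeasurableAtFilter
          (fun φ : ℝ => Real.sqrt (1 - k ^ 2 * Real.sin φ ^ 2)) (nhds v) :=
        hcont.stronglyMeasurable.stronglyMeasurableAtFilter
      exact intervalIntegral.integral_hasDerivAt_right h1 h2 hcont.continuousAt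
    -- derivative of g
    have hsin : HasDerivAt Real.sin (Real.cos v) v := Real.hasDerivAt_sin v
    have hcos : HasDerivAt Real.cos (-Real.sin v) v := Real.hasDerivAt_cos v
    have hnum : HasDerivAt (fun φ => k ^ 2 * Real.sin φ * Real.cos φ)
        ((k ^ 2 * Real.cos v) * Real.cos v + (k ^ 2 * Real.sin v) * (-Real.sin v)) v :=
      (hsin.const_mul (k ^ 2)).mul hcos
    have hD : HasDerivAt (fun φ => 1 - k ^ 2 * Real.sin φ ^ 2)
        (-(k ^ 2 * (2 * Real.sin v * Real.cos v))) v := by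
      have h2 : HasDerivAt (fun φ => Real.sin φ ^ 2) (2 * Real.sin v ^ 1 * Real.cos v) v :=
        hsin.pow 2
      have h3 := (h2.const_mul (k ^ 2)).const_sub 1
      refine h3.congr_deriv ?_
      ring
    have hS : HasDerivAt (fun φ => Real.sqrt (1 - k ^ 2 * Real.sin φ ^ 2))
        ((-(k ^ 2 * (2 * Real.sin v * Real.cos v))) /
          (2 * Real.sqrt (1 - k ^ 2 * Real.sin v ^ 2))) v :=
      hD.sqrt (ne_of_gt (hDpos v))
    have hgd : HasDerivAt g
        ((((k ^ 2 * Real.cos v) * Real.cos v + (k ^ 2 * Real.sin v) * (-Real.sin v)) *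
            Real.sqrt (1 - k ^ 2 * Real.sin v ^ 2) -
          (k ^ 2 * Real.sin v * Real.cos v) *
            ((-(k ^ 2 * (2 * Real.sin v * Real.cos v))) /
              (2 * Real.sqrt (1 - k ^ 2 * Real.sin v ^ 2)))) /
          Real.sqrt (1 - k ^ 2 * Real.sin v ^ 2) ^ 2) v :=
      hnum.div hS (ne_of_gt (hSpos v))
    have h := hE.sub hgd
    refine h.congr_deriv ?_
    have hS0 : Real.sqrt (1 - k ^ 2 * Real.sin v ^ 2) ≠ 0 := ne_of_gt (hSpos v)
    have hS2 : Real.sqrt (1 - k ^ 2 * Real.sin v ^ 2) ^ 2 = 1 - k ^ 2 * Real.sin v ^ 2 :=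
      Real.sq_sqrt (le_of_lt (hDpos v))
    have hpyth : Real.sin v ^ 2 + Real.cos v ^ 2 = 1 := Real.sin_sq_add_cos_sq v
    exact (f2_aux (k ^ 2) _ _ _ hS0 hS2 hpyth).symm
  have hmono : StrictMono f := by
    apply strictMono_of_deriv_pos
    intro x
    rw [(hderiv x).deriv]
    exact div_pos (by linarith) (pow_pos (hSpos x) 3)
  have hf0 : f 0 = 0 := by
    simp [hf, hg, EllE, intervalIntegral.integral_same]
  have hfu : 0 < f u := by
    rw [← hf0]; exact hmono hu
  have hEg : g u < EllE u k := by
    have h1 : EllE u k - g u > 0 := hfu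
    linarith
  have hmul := mul_lt_mul_of_pos_left hEg (hSpos u)
  have hgu : Real.sqrt (1 - k ^ 2 * Real.sin u ^ 2) * g u =
      k ^ 2 * Real.sin u * Real.cos u := by
    rw [hg, mul_comm]
    exact div_mul_cancel₀ _ (ne_of_gt (hSpos u))
  linarith [hmul, hgu.symm.le]
end

section
/- For every k ∈ (0,1) and every u > 0, one has √(1−k²sin²u)·(E(u,k) − (1−k²)·F(u,k)) > k²·sin u·cos u. (The function f₃(p) = −dn p·E(p) + p·dn p·(1−k²) + k² sn p·cn p is negative for all p > 0 and k ∈ (0,1), written in the Legendre variable u = am(p,k).) -/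
open Real

/-- Incomplete elliptic integral of the first kind in Legendre form:
`F(u,k) = ∫₀ᵘ dφ/√(1 − k² sin² φ)`. -/
noncomputable def EllF (u k : ℝ) : ℝ :=
  ∫ φ in (0:ℝ)..u, 1 / Real.sqrt (1 - k ^ 2 * Real.sin φ ^ 2)

/-- For every `k ∈ (0,1)` and every `u > 0`:
`√(1 − k² sin² u) · (E(u,k) − (1 − k²) F(u,k)) > k² sin u cos u`
(negativity of the function `f₃` of the paper, in the Legendre variable). -/
theorem f3_negative (k u : ℝ) (hk : k ∈ Set.Ioo (0:ℝ) 1) (hu : 0 < u) :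
    Real.sqrt (1 - k ^ 2 * Real.sin u ^ 2) * (EllE u k - (1 - k ^ 2) * EllF u k) >
      k ^ 2 * Real.sin u * Real.cos u := by
  obtain ⟨hk0, hk1⟩ := hk
  have hpos : ∀ φ : ℝ, 0 < 1 - k ^ 2 * Real.sin φ ^ 2 := by
    intro φ
    nlinarith [sin_sq_le_one φ, sq_nonneg (Real.sin φ), sq_nonneg k]
  set d : ℝ → ℝ := fun φ => Real.sqrt (1 - k ^ 2 * Real.sin φ ^ 2) with hd
  have hdpos : ∀ φ, 0 < d φ := fun φ => Real.sqrt_pos.mpr (hpos φ)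
  have hdne : ∀ φ, d φ ≠ 0 := fun φ => (hdpos φ).ne'
  have hdsq : ∀ φ, d φ ^ 2 = 1 - k ^ 2 * Real.sin φ ^ 2 :=
    fun φ => Real.sq_sqrt (hpos φ).le
  -- continuity of d
  have hdcont : Continuous d := by
    apply Real.continuous_sqrt.comp
    fun_prop
  -- derivative of d
  have hdderiv : ∀ φ : ℝ, HasDerivAt d (-(k ^ 2 * Real.sin φ * Real.cos φ) / d φ) φ := by
    intro φ
    have hinner : HasDerivAt (fun x => 1 - k ^ 2 * Real.sin x ^ 2)
        (-(k ^ 2 * (2 * Real.sin φ * Real.cos φ))) φ := by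
      have h1 : HasDerivAt (fun x => Real.sin x ^ 2) (2 * Real.sin φ * Real.cos φ) φ := by
        have := ((Real.hasDerivAt_sin φ).pow 2)
        refine this.congr_deriv ?_
        ring
      exact (h1.const_mul (k ^ 2)).const_sub 1
    have := hinner.sqrt (hpos φ).ne'
    have hne := hdne φ
    rw [hd] at hne ⊢
    convert this using 1
    field_simp
  -- the function s and its derivative sp
  set s : ℝ → ℝ := fun φ => k ^ 2 * Real.sin φ * Real.cos φ / d φ with hs
  set sp : ℝ → ℝ := fun φ =>
    k ^ 2 * (Real.cos φ ^ 2 - Real.sin φ ^ 2) / d φ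
      + (k ^ 2 * Real.sin φ * Real.cos φ) ^ 2 / d φ ^ 3 with hsp
  have hsderiv : ∀ φ : ℝ, HasDerivAt s (sp φ) φ := by
    intro φ
    have hN : HasDerivAt (fun x => k ^ 2 * Real.sin x * Real.cos x)
        (k ^ 2 * (Real.cos φ ^ 2 - Real.sin φ ^ 2)) φ := by
      have h := ((Real.hasDerivAt_sin φ).mul (Real.hasDerivAt_cos φ)).const_mul (k ^ 2)
      simp only [Pi.mul_apply, ← mul_assoc] at h
      refine h.congr_deriv ?_
      ring
    have hdiv := hN.div (hdderiv φ) (hdne φ)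
    refine hdiv.congr_deriv ?_
    rw [hsp]
    have h2 := hdsq φ
    have hne := hdne φ
    field_simp
    ring
  -- the positive integrand g
  set g : ℝ → ℝ := fun φ => k ^ 2 * (1 - k ^ 2) * Real.sin φ ^ 2 / d φ ^ 3 with hg
  -- pointwise identity
  have hident : ∀ φ : ℝ,
      d φ - (1 - k ^ 2) * (1 / d φ) - sp φ = g φ := by
    intro φ
    rw [hsp, hg]
    have h2 := hdsq φ
    have hpy := Real.sin_sq_add_cos_sq φ
    have hne := hdne φ
    field_simp
    linear_combination (d φ ^ 2 + k ^ 2 * Real.sin φ ^ 2) * h2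
      - (k ^ 2 * d φ ^ 2 + k ^ 4 * Real.sin φ ^ 2) * hpy
  -- continuity of sp and g
  have hspcont : Continuous sp := by
    apply Continuous.add
    · exact (by fun_prop : Continuous fun φ => k ^ 2 * (Real.cos φ ^ 2 - Real.sin φ ^ 2)).div
        hdcont hdne
    · exact (by fun_prop : Continuous fun φ => (k ^ 2 * Real.sin φ * Real.cos φ) ^ 2).div
        (hdcont.pow 3) (fun φ => pow_ne_zero 3 (hdne φ))
  have hgcont : Continuous g := by
    exact (by fun_prop : Continuous fun φ => k ^ 2 * (1 - k ^ 2) * Real.sin φ ^ 2).div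
      (hdcont.pow 3) (fun φ => pow_ne_zero 3 (hdne φ))
  have hFcont : Continuous fun φ => 1 / d φ :=
    continuous_const.div hdcont hdne
  -- FTC for s
  have hFTC : ∫ φ in (0:ℝ)..u, sp φ = s u - s 0 :=
    intervalIntegral.integral_eq_sub_of_hasDerivAt (fun x _ => hsderiv x)
      (hspcont.intervalIntegrable 0 u)
  have hs0 : s 0 = 0 := by simp [hs]
  -- combine integrals
  have hEI : EllE u k - (1 - k ^ 2) * EllF u k - s u = ∫ φ in (0:ℝ)..u, g φ := by
    have hsplit : ∫ φ in (0:ℝ)..u, (d φ - (1 - k ^ 2) * (1 / d φ) - sp φ)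
        = (∫ φ in (0:ℝ)..u, d φ) - (1 - k ^ 2) * (∫ φ in (0:ℝ)..u, (1 / d φ))
            - ∫ φ in (0:ℝ)..u, sp φ := by
      rw [intervalIntegral.integral_sub ((hdcont.intervalIntegrable 0 u).sub
          ((hFcont.intervalIntegrable 0 u).const_mul _)) (hspcont.intervalIntegrable 0 u),
        intervalIntegral.integral_sub (hdcont.intervalIntegrable 0 u)
          ((hFcont.intervalIntegrable 0 u).const_mul _),
        intervalIntegral.integral_const_mul]
    have hcongr : (∫ φ in (0:ℝ)..u, (d φ - (1 - k ^ 2) * (1 / d φ) - sp φ))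
        = ∫ φ in (0:ℝ)..u, g φ :=
      intervalIntegral.integral_congr (fun x _ => hident x)
    rw [EllE, EllF]
    rw [← hcongr] at *
    rw [hsplit, hFTC, hs0] at hcongr
    linarith [hcongr]
  -- positivity of the integral of g
  have hgnonneg : ∀ φ : ℝ, 0 ≤ g φ := by
    intro φ
    apply div_nonneg
    · have : 0 ≤ 1 - k ^ 2 := by nlinarith
      positivity
    · positivity
  set t : ℝ := min u 1 with ht
  have ht0 : 0 < t := lt_min hu one_pos
  have htu : t ≤ u := min_le_left _ _
  have hpos1 : 0 < ∫ φ in (0:ℝ)..t, g φ := by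
    apply intervalIntegral.intervalIntegral_pos_of_pos_on (hgcont.intervalIntegrable 0 t)
    · intro x hx
      rw [hg]
      have hsinpos : 0 < Real.sin x :=
        Real.sin_pos_of_pos_of_lt_pi hx.1 (by
          have : x < 1 := lt_of_lt_of_le hx.2 (min_le_right _ _)
          linarith [Real.pi_gt_three])
      have hk2 : 0 < 1 - k ^ 2 := by nlinarith
      have := hdpos x
      positivity
    · exact ht0
  have hpos2 : 0 ≤ ∫ φ in t..u, g φ :=
    intervalIntegral.integral_nonneg htu (fun x _ => hgnonneg x)
  have hadd : (∫ φ in (0:ℝ)..t, g φ) + (∫ φ in t..u, g φ) = ∫ φ in (0:ℝ)..u, g φ :=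
    intervalIntegral.integral_add_adjacent_intervals (hgcont.intervalIntegrable 0 t)
      (hgcont.intervalIntegrable t u)
  have hIpos : 0 < ∫ φ in (0:ℝ)..u, g φ := by linarith
  -- finish
  have hds : d u * s u = k ^ 2 * Real.sin u * Real.cos u := by
    rw [hs]
    rw [mul_div_assoc']
    exact mul_div_cancel_left₀ _ (hdne u)
  have hval : EllE u k - (1 - k ^ 2) * EllF u k = s u + ∫ φ in (0:ℝ)..u, g φ := by
    linarith [hEI]
  show d u * (EllE u k - (1 - k ^ 2) * EllF u k) > k ^ 2 * Real.sin u * Real.cos u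
  rw [hval, mul_add, hds]
  have := mul_pos (hdpos u) hIpos
  linarith
end

section
/- Let k ∈ (0,1). For every integer n ≥ 1, the function u ↦ −E(u,k)·cos u + (1−k²)·F(u,k)·cos u + sin u·√(1−k²sin²u) (which is the function f₄(p) = −cn p·E(p) + p·cn p·(1−k²) + sn p·dn p of the paper written in the Legendre variable u = am(p,k)) has exactly one zero in the open interval ((2n−1)π/2, (2n+1)π/2), and this zero lies in the subinterval (nπ, nπ + π/2). (Proposition on the roots p₂ⁿ(k) of f₄, expressed in Legendre form: p₂ⁿ(k) ∈ (2nK(k), (2n+1)K(k)).) -/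
open Real

namespace F4Aux

/-- The "delta amplitude" `dn` in Legendre form. -/
noncomputable def D (k u : ℝ) : ℝ := Real.sqrt (1 - k ^ 2 * Real.sin u ^ 2)

variable {k : ℝ}

lemma rad_pos (hk : k ∈ Set.Ioo (0:ℝ) 1) (u : ℝ) :
    (0:ℝ) < 1 - k ^ 2 * Real.sin u ^ 2 := by
  have h1 : Real.sin u ^ 2 ≤ 1 := sin_sq_le_one u
  nlinarith [hk.1, hk.2, sq_nonneg (Real.sin u)]

lemma D_pos (hk : k ∈ Set.Ioo (0:ℝ) 1) (u : ℝ) : 0 < D k u :=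
  Real.sqrt_pos.mpr (rad_pos hk u)

lemma D_sq (hk : k ∈ Set.Ioo (0:ℝ) 1) (u : ℝ) :
    D k u ^ 2 = 1 - k ^ 2 * Real.sin u ^ 2 :=
  Real.sq_sqrt (rad_pos hk u).le

lemma D_ge (hk : k ∈ Set.Ioo (0:ℝ) 1) (u : ℝ) :
    Real.sqrt (1 - k ^ 2) ≤ D k u := by
  apply Real.sqrt_le_sqrt
  have h1 : Real.sin u ^ 2 ≤ 1 := sin_sq_le_one u
  nlinarith [sq_nonneg k]

lemma cont_rad : Continuous fun u : ℝ => 1 - k ^ 2 * Real.sin u ^ 2 := by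
  fun_prop

lemma cont_D : Continuous (D k) := cont_rad.sqrt

lemma cont_invD (hk : k ∈ Set.Ioo (0:ℝ) 1) : Continuous fun u : ℝ => 1 / D k u :=
  continuous_const.div cont_D fun u => (D_pos hk u).ne'

lemma hasDerivAt_EllF (hk : k ∈ Set.Ioo (0:ℝ) 1) (u : ℝ) :
    HasDerivAt (fun u => EllF u k) (1 / D k u) u :=
  ((cont_invD hk).integral_hasStrictDerivAt 0 u).hasDerivAt

lemma hasDerivAt_EllE (hk : k ∈ Set.Ioo (0:ℝ) 1) (u : ℝ) :
    HasDerivAt (fun u => EllE u k) (D k u) u :=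
  ((cont_D (k := k)).integral_hasStrictDerivAt 0 u).hasDerivAt

/-- `h(u) = (1-k²) F(u,k) - E(u,k)`. -/
noncomputable def h (k u : ℝ) : ℝ := (1 - k ^ 2) * EllF u k - EllE u k

lemma hasDerivAt_h (hk : k ∈ Set.Ioo (0:ℝ) 1) (u : ℝ) :
    HasDerivAt (fun u => h k u) ((1 - k ^ 2) * (1 / D k u) - D k u) u :=
  ((hasDerivAt_EllF hk u).const_mul _).sub (hasDerivAt_EllE hk u)

lemma integrand_eq (hk : k ∈ Set.Ioo (0:ℝ) 1) (φ : ℝ) :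
    (1 - k ^ 2) * (1 / D k φ) - D k φ = -(k ^ 2 * Real.cos φ ^ 2) / D k φ := by
  have hD := D_pos hk φ
  have hsq := D_sq hk φ
  have hpy := Real.sin_sq_add_cos_sq φ
  field_simp
  nlinarith [hsq, hpy]

lemma h_eq_integral (hk : k ∈ Set.Ioo (0:ℝ) 1) (u : ℝ) :
    h k u = ∫ φ in (0:ℝ)..u, -(k ^ 2 * Real.cos φ ^ 2) / D k φ := by
  have hiF : IntervalIntegrable (fun φ => 1 / D k φ) MeasureTheory.volume 0 u :=
    (cont_invD hk).intervalIntegrable _ _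
  have hiE : IntervalIntegrable (D k) MeasureTheory.volume 0 u :=
    cont_D.intervalIntegrable _ _
  have : h k u = ∫ φ in (0:ℝ)..u, ((1 - k ^ 2) * (1 / D k φ) - D k φ) := by
    rw [intervalIntegral.integral_sub (hiF.const_mul _) hiE,
      intervalIntegral.integral_const_mul]
    rfl
  rw [this]
  exact intervalIntegral.integral_congr fun φ _ => integrand_eq hk φ

lemma j_nonpos (hk : k ∈ Set.Ioo (0:ℝ) 1) (φ : ℝ) :
    -(k ^ 2 * Real.cos φ ^ 2) / D k φ ≤ 0 := by
  apply div_nonpos_of_nonpos_of_nonneg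
  · nlinarith [sq_nonneg k, sq_nonneg (Real.cos φ)]
  · exact (D_pos hk φ).le

lemma cont_j (hk : k ∈ Set.Ioo (0:ℝ) 1) :
    Continuous fun φ => -(k ^ 2 * Real.cos φ ^ 2) / D k φ :=
  Continuous.div (by fun_prop) cont_D fun u => (D_pos hk u).ne'

lemma h_neg (hk : k ∈ Set.Ioo (0:ℝ) 1) {u : ℝ} (hu : π / 4 ≤ u) : h k u < 0 := by
  have hπ : (0:ℝ) < π / 4 := by positivity
  have hi1 : IntervalIntegrable (fun φ => -(k ^ 2 * Real.cos φ ^ 2) / D k φ)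
      MeasureTheory.volume 0 (π / 4) := (cont_j hk).intervalIntegrable _ _
  have hi2 : IntervalIntegrable (fun φ => -(k ^ 2 * Real.cos φ ^ 2) / D k φ)
      MeasureTheory.volume (π / 4) u := (cont_j hk).intervalIntegrable _ _
  have hsplit : h k u = (∫ φ in (0:ℝ)..(π / 4), -(k ^ 2 * Real.cos φ ^ 2) / D k φ)
      + ∫ φ in (π / 4 : ℝ)..u, -(k ^ 2 * Real.cos φ ^ 2) / D k φ := by
    rw [h_eq_integral hk, ← intervalIntegral.integral_add_adjacent_intervals hi1 hi2]
  have h1 : (∫ φ in (0:ℝ)..(π / 4), -(k ^ 2 * Real.cos φ ^ 2) / D k φ) < 0 := by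
    have : (0:ℝ) < ∫ φ in (0:ℝ)..(π / 4), k ^ 2 * Real.cos φ ^ 2 / D k φ := by
      apply intervalIntegral.intervalIntegral_pos_of_pos_on
      · exact (Continuous.div (by fun_prop) cont_D
          fun v => (D_pos hk v).ne').intervalIntegrable _ _
      · intro x hx
        have hc : 0 < Real.cos x := by
          apply Real.cos_pos_of_mem_Ioo
          constructor <;> nlinarith [hx.1, hx.2, pi_pos]
        have hDp := D_pos hk x
        have hk2p : (0:ℝ) < k ^ 2 := pow_pos hk.1 2
        exact div_pos (mul_pos hk2p (pow_pos hc 2)) hDp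
      · exact hπ
    have heq : ∀ φ : ℝ, -(k ^ 2 * Real.cos φ ^ 2) / D k φ
        = -(k ^ 2 * Real.cos φ ^ 2 / D k φ) := fun φ => by ring
    simp only [heq, intervalIntegral.integral_neg]
    linarith
  have h2 : (∫ φ in (π / 4 : ℝ)..u, -(k ^ 2 * Real.cos φ ^ 2) / D k φ) ≤ 0 := by
    have : (0:ℝ) ≤ ∫ φ in (π / 4 : ℝ)..u, k ^ 2 * Real.cos φ ^ 2 / D k φ := by
      apply intervalIntegral.integral_nonneg hu
      intro x _
      have := D_pos hk x
      positivity
    have heq : ∀ φ : ℝ, -(k ^ 2 * Real.cos φ ^ 2) / D k φ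
        = -(k ^ 2 * Real.cos φ ^ 2 / D k φ) := fun φ => by ring
    simp only [heq, intervalIntegral.integral_neg]
    linarith
  linarith [hsplit, h1, h2]

lemma h_lower (hk : k ∈ Set.Ioo (0:ℝ) 1) {u : ℝ} (hu : 0 ≤ u) :
    -(k ^ 2 / Real.sqrt (1 - k ^ 2)) * u ≤ h k u := by
  have hs : 0 < Real.sqrt (1 - k ^ 2) := Real.sqrt_pos.mpr (by nlinarith [hk.1, hk.2])
  have hC : ∀ x ∈ Set.uIoc (0:ℝ) u,
      ‖-(k ^ 2 * Real.cos x ^ 2) / D k x‖ ≤ k ^ 2 / Real.sqrt (1 - k ^ 2) := by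
    intro x _
    have hD := D_pos hk x
    have hDg := D_ge hk x
    rw [Real.norm_eq_abs, abs_div, abs_neg, abs_of_nonneg (by positivity),
      abs_of_nonneg hD.le]
    exact div_le_div₀ (by positivity) (by nlinarith [Real.cos_sq_le_one x]) hs hDg
  have := intervalIntegral.norm_integral_le_of_norm_le_const hC
  rw [h_eq_integral hk]
  have habs : |∫ φ in (0:ℝ)..u, -(k ^ 2 * Real.cos φ ^ 2) / D k φ|
      ≤ k ^ 2 / Real.sqrt (1 - k ^ 2) * u := by
    simpa [Real.norm_eq_abs, abs_of_nonneg hu] using this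
  have := abs_le.mp habs
  linarith [this.1]

/-- cos is nonzero strictly between consecutive odd multiples of π/2. -/
lemma cos_ne_zero_of_Ioo {n : ℕ} {u : ℝ}
    (hu : u ∈ Set.Ioo ((2 * (n:ℝ) - 1) * π / 2) ((2 * (n:ℝ) + 1) * π / 2)) :
    Real.cos u ≠ 0 := by
  intro hc
  obtain ⟨m, hm⟩ := Real.cos_eq_zero_iff.mp hc
  have hπ := pi_pos
  have h1 : (2 * (n:ℝ) - 1) < 2 * (m:ℝ) + 1 := by
    have := hu.1; rw [hm] at this; nlinarith
  have h2 : (2 * (m:ℝ) + 1) < 2 * (n:ℝ) + 1 := by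
    have := hu.2; rw [hm] at this; nlinarith
  have h1' : (n:ℤ) - 1 < m := by exact_mod_cast (by push_cast; linarith : ((n:ℝ) - 1 : ℝ) < (m:ℝ))
  have h2' : (m:ℤ) < n := by exact_mod_cast (by push_cast; linarith : ((m:ℝ) : ℝ) < (n:ℝ))
  omega

/-- The auxiliary function `φ(u) = h(u) + tan u · dn u`. -/
noncomputable def P (k u : ℝ) : ℝ := h k u + Real.tan u * D k u

lemma hasDerivAt_D (hk : k ∈ Set.Ioo (0:ℝ) 1) (u : ℝ) :
    HasDerivAt (D k) (-(k ^ 2 * (2 * Real.sin u * Real.cos u)) / (2 * D k u)) u := by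
  have hrad : HasDerivAt (fun u : ℝ => 1 - k ^ 2 * Real.sin u ^ 2)
      (-(k ^ 2 * (2 * Real.sin u * Real.cos u))) u := by
    have hs : HasDerivAt Real.sin (Real.cos u) u := Real.hasDerivAt_sin u
    have h2 : HasDerivAt (fun u : ℝ => Real.sin u ^ 2) (2 * Real.sin u * Real.cos u) u := by
      simpa [pow_two, mul_comm, mul_assoc, two_mul, add_mul, mul_add] using (show HasDerivAt (fun u => Real.sin u * Real.sin u)
        (Real.cos u * Real.sin u + Real.sin u * Real.cos u) u from hs.mul hs)
    simpa using ((h2.const_mul (k ^ 2)).const_sub 1)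
  exact hrad.sqrt (rad_pos hk u).ne'

lemma hasDerivAt_P (hk : k ∈ Set.Ioo (0:ℝ) 1) {u : ℝ} (hc : Real.cos u ≠ 0) :
    HasDerivAt (P k) (((1 - k ^ 2) * (1 / D k u) - D k u)
      + ((1 / Real.cos u ^ 2) * D k u
        + Real.tan u * (-(k ^ 2 * (2 * Real.sin u * Real.cos u)) / (2 * D k u)))) u := by
  exact (hasDerivAt_h hk u).add ((Real.hasDerivAt_tan hc).mul (hasDerivAt_D hk u))

lemma P_deriv_pos (hk : k ∈ Set.Ioo (0:ℝ) 1) {u : ℝ} (hc : Real.cos u ≠ 0) :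
    0 < ((1 - k ^ 2) * (1 / D k u) - D k u)
      + ((1 / Real.cos u ^ 2) * D k u
        + Real.tan u * (-(k ^ 2 * (2 * Real.sin u * Real.cos u)) / (2 * D k u))) := by
  have hD := D_pos hk u
  have hsq := D_sq hk u
  have hpy := Real.sin_sq_add_cos_sq u
  have hk2 : (0:ℝ) < 1 - k ^ 2 := by nlinarith [hk.1, hk.2]
  have key : ((1 - k ^ 2) * (1 / D k u) - D k u)
      + ((1 / Real.cos u ^ 2) * D k u
        + Real.tan u * (-(k ^ 2 * (2 * Real.sin u * Real.cos u)) / (2 * D k u)))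
      = (1 - k ^ 2) / (D k u * Real.cos u ^ 2) := by
    rw [Real.tan_eq_sin_div_cos]
    field_simp
    linear_combination (1 - Real.cos u ^ 2) * hsq
      - (k ^ 2) * hpy
  rw [key]
  positivity

lemma P_strictMonoOn (hk : k ∈ Set.Ioo (0:ℝ) 1) (n : ℕ) :
    StrictMonoOn (P k)
      (Set.Ioo ((2 * (n:ℝ) - 1) * π / 2) ((2 * (n:ℝ) + 1) * π / 2)) := by
  apply strictMonoOn_of_deriv_pos (convex_Ioo _ _)
  · intro x hx
    exact (hasDerivAt_P hk (cos_ne_zero_of_Ioo hx)).continuousAt.continuousWithinAt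
  · intro x hx
    rw [interior_Ioo] at hx
    rw [(hasDerivAt_P hk (cos_ne_zero_of_Ioo hx)).deriv]
    exact P_deriv_pos hk (cos_ne_zero_of_Ioo hx)

lemma g_eq (hk : k ∈ Set.Ioo (0:ℝ) 1) {u : ℝ} (hc : Real.cos u ≠ 0) :
    -EllE u k * Real.cos u + (1 - k ^ 2) * EllF u k * Real.cos u +
      Real.sin u * Real.sqrt (1 - k ^ 2 * Real.sin u ^ 2)
      = Real.cos u * P k u := by
  show _ = Real.cos u * (h k u + Real.tan u * D k u)
  rw [Real.tan_eq_sin_div_cos, h, D]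
  field_simp
  ring

end F4Aux

open F4Aux in
/-- For `k ∈ (0,1)` and every integer `n ≥ 1`, the function
`u ↦ −E(u,k)·cos u + (1−k²)·F(u,k)·cos u + sin u·√(1 − k² sin² u)`
(the function `f₄` of the paper in the Legendre variable) has exactly one zero in
`((2n−1)π/2, (2n+1)π/2)`, and this zero lies in `(nπ, nπ + π/2)`. -/
theorem f4_unique_root (k : ℝ) (hk : k ∈ Set.Ioo (0:ℝ) 1) (n : ℕ) (hn : 1 ≤ n) :
    (∃! u : ℝ, u ∈ Set.Ioo ((2 * (n:ℝ) - 1) * π / 2) ((2 * (n:ℝ) + 1) * π / 2) ∧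
      -EllE u k * Real.cos u + (1 - k ^ 2) * EllF u k * Real.cos u +
        Real.sin u * Real.sqrt (1 - k ^ 2 * Real.sin u ^ 2) = 0) ∧
    (∀ u : ℝ, u ∈ Set.Ioo ((2 * (n:ℝ) - 1) * π / 2) ((2 * (n:ℝ) + 1) * π / 2) →
      -EllE u k * Real.cos u + (1 - k ^ 2) * EllF u k * Real.cos u +
        Real.sin u * Real.sqrt (1 - k ^ 2 * Real.sin u ^ 2) = 0 →
      u ∈ Set.Ioo ((n:ℝ) * π) ((n:ℝ) * π + π / 2)) := by
  have hπ := Real.pi_pos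
  have hn1 : (1:ℝ) ≤ (n:ℝ) := by exact_mod_cast hn
  set a : ℝ := (2 * (n:ℝ) - 1) * π / 2 with ha
  set b : ℝ := (2 * (n:ℝ) + 1) * π / 2 with hb
  have hk2 : (0:ℝ) < 1 - k ^ 2 := by nlinarith [hk.1, hk.2]
  have hs : 0 < Real.sqrt (1 - k ^ 2) := Real.sqrt_pos.mpr hk2
  -- constants for the upper test point
  set C : ℝ := k ^ 2 / Real.sqrt (1 - k ^ 2) with hC
  have hCpos : 0 < C := by have := hk.1; positivity
  set c : ℝ := (C * b + 1) / Real.sqrt (1 - k ^ 2) with hcdef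
  have hbpos : 0 < b := by
    rw [hb]; nlinarith
  have hcpos : 0 < c := by
    rw [hcdef]; positivity
  set uB : ℝ := (n:ℝ) * π + Real.arctan c with hup
  have harc0 : 0 < Real.arctan c := by simpa using Real.arctan_strictMono hcpos
  have harcπ : Real.arctan c < π / 2 := Real.arctan_lt_pi_div_two c
  have hanπ : a < (n:ℝ) * π := by rw [ha]; nlinarith
  have hupb : uB < b := by rw [hup, hb]; nlinarith
  have hnπu : (n:ℝ) * π < uB := by rw [hup]; linarith
  have hnπI : (n:ℝ) * π ∈ Set.Ioo a b := ⟨hanπ, by linarith⟩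
  have hupI : uB ∈ Set.Ioo a b := ⟨by linarith, hupb⟩
  -- value of P at n π
  have htan_nπ : Real.tan ((n:ℝ) * π) = 0 := Real.tan_nat_mul_pi n
  have hPnπ : P k ((n:ℝ) * π) < 0 := by
    have hh : h k ((n:ℝ) * π) < 0 := h_neg hk (by nlinarith)
    rw [P, htan_nπ]; linarith
  -- value of P at uB
  have htan_up : Real.tan uB = c := by
    have := (Real.tan_periodic.nat_mul n) (Real.arctan c)
    rw [hup, add_comm]
    rw [this]
    exact Real.tan_arctan c
  have hPup : 0 < P k uB := by
    have hh : -C * uB ≤ h k uB := h_lower hk (by rw [hup]; nlinarith)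
    have hD := D_ge hk uB
    have : c * Real.sqrt (1 - k ^ 2) ≤ c * D k uB :=
      mul_le_mul_of_nonneg_left hD hcpos.le
    have hcs : c * Real.sqrt (1 - k ^ 2) = C * b + 1 := by
      rw [hcdef]; field_simp
    rw [P, htan_up]
    nlinarith [hupb, hCpos]
  -- IVT gives the root
  have hcontP : ContinuousOn (P k) (Set.Icc ((n:ℝ) * π) uB) := by
    intro x hx
    have hxI : x ∈ Set.Ioo a b := ⟨by linarith [hx.1], by linarith [hx.2]⟩
    exact (hasDerivAt_P hk (cos_ne_zero_of_Ioo hxI)).continuousAt.continuousWithinAt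
  have hIVT := intermediate_value_Ioo hnπu.le hcontP
  have h0mem : (0:ℝ) ∈ Set.Ioo (P k ((n:ℝ) * π)) (P k uB) := ⟨hPnπ, hPup⟩
  obtain ⟨x, hxmem, hPx⟩ := hIVT h0mem
  have hxI : x ∈ Set.Ioo a b := ⟨by linarith [hxmem.1], by linarith [hxmem.2]⟩
  have hxcos : Real.cos x ≠ 0 := cos_ne_zero_of_Ioo hxI
  have hgx : -EllE x k * Real.cos x + (1 - k ^ 2) * EllF x k * Real.cos x +
      Real.sin x * Real.sqrt (1 - k ^ 2 * Real.sin x ^ 2) = 0 := by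
    rw [g_eq hk hxcos, hPx, mul_zero]
  have hmono := P_strictMonoOn hk n
  have huniq : ∀ y : ℝ, y ∈ Set.Ioo a b →
      -EllE y k * Real.cos y + (1 - k ^ 2) * EllF y k * Real.cos y +
        Real.sin y * Real.sqrt (1 - k ^ 2 * Real.sin y ^ 2) = 0 → y = x := by
    intro y hyI hgy
    have hycos := cos_ne_zero_of_Ioo hyI
    have hPy : P k y = 0 := by
      rw [g_eq hk hycos] at hgy
      exact (mul_eq_zero.mp hgy).resolve_left hycos
    exact hmono.injOn hyI hxI (by rw [hPy, hPx])
  have hxsub : x ∈ Set.Ioo ((n:ℝ) * π) ((n:ℝ) * π + π / 2) := by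
    constructor
    · exact hxmem.1
    · have : x < uB := hxmem.2
      rw [hup] at this
      linarith
  constructor
  · exact ⟨x, ⟨hxI, hgx⟩, fun y hy => huniq y hy.1 hy.2⟩
  · intro u huI hgu
    rw [huniq u huI hgu]
    exact hxsub
end

section
/- Let k ∈ (0,1) and n ∈ ℤ. The function g₄(u) = −E(u,k) + (1−k²)·F(u,k) + tan u·√(1−k²sin²u) is strictly increasing on the interval ((2n−1)π/2, (2n+1)π/2); moreover g₄(u) → −∞ as u → ((2n−1)π/2)⁺ and g₄(u) → +∞ as u → ((2n+1)π/2)⁻. (Monotonicity and boundary behaviour of g₄ = f₄/cn used to prove uniqueness of the roots of f₄.) -/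
open Real Filter

/-- For `k ∈ (0,1)` and `n ∈ ℤ`, the function
`g₄(u) = −E(u,k) + (1−k²)·F(u,k) + tan u·√(1 − k² sin² u)` is strictly increasing on
`((2n−1)π/2, (2n+1)π/2)`, tends to `−∞` as `u → ((2n−1)π/2)⁺` and to `+∞`
as `u → ((2n+1)π/2)⁻`. -/
theorem g4_strictMono_and_limits (k : ℝ) (hk : k ∈ Set.Ioo (0:ℝ) 1) (n : ℤ) :
    StrictMonoOn
      (fun u : ℝ => -EllE u k + (1 - k ^ 2) * EllF u k +
        Real.tan u * Real.sqrt (1 - k ^ 2 * Real.sin u ^ 2))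
      (Set.Ioo ((2 * (n:ℝ) - 1) * π / 2) ((2 * (n:ℝ) + 1) * π / 2)) ∧
    Tendsto (fun u : ℝ => -EllE u k + (1 - k ^ 2) * EllF u k +
        Real.tan u * Real.sqrt (1 - k ^ 2 * Real.sin u ^ 2))
      (nhdsWithin ((2 * (n:ℝ) - 1) * π / 2) (Set.Ioi ((2 * (n:ℝ) - 1) * π / 2))) atBot ∧
    Tendsto (fun u : ℝ => -EllE u k + (1 - k ^ 2) * EllF u k +
        Real.tan u * Real.sqrt (1 - k ^ 2 * Real.sin u ^ 2))
      (nhdsWithin ((2 * (n:ℝ) + 1) * π / 2) (Set.Iio ((2 * (n:ℝ) + 1) * π / 2))) atTop := by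
  obtain ⟨hk0, hk1⟩ := hk
  have hπ : (0:ℝ) < π := Real.pi_pos
  set a : ℝ := (2 * (n:ℝ) - 1) * π / 2 with ha
  set b : ℝ := (2 * (n:ℝ) + 1) * π / 2 with hb
  set g : ℝ → ℝ := fun u : ℝ => -EllE u k + (1 - k ^ 2) * EllF u k +
        Real.tan u * Real.sqrt (1 - k ^ 2 * Real.sin u ^ 2) with hg
  have hpos : ∀ u : ℝ, 0 < 1 - k ^ 2 * Real.sin u ^ 2 := by
    intro u
    nlinarith [Real.sin_sq_le_one u, sq_nonneg (Real.sin u), sq_nonneg k]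
  have hwpos : ∀ u : ℝ, 0 < Real.sqrt (1 - k ^ 2 * Real.sin u ^ 2) :=
    fun u => Real.sqrt_pos.mpr (hpos u)
  have hcontw : Continuous fun u : ℝ => Real.sqrt (1 - k ^ 2 * Real.sin u ^ 2) :=
    (continuous_const.sub (continuous_const.mul ((Real.continuous_sin).pow 2))).sqrt
  have hcontF : Continuous fun u : ℝ => 1 / Real.sqrt (1 - k ^ 2 * Real.sin u ^ 2) :=
    continuous_const.div hcontw fun u => (hwpos u).ne'
  have hDE : ∀ u : ℝ, HasDerivAt (fun u => EllE u k)
      (Real.sqrt (1 - k ^ 2 * Real.sin u ^ 2)) u :=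
    fun u => (hcontw.integral_hasStrictDerivAt 0 u).hasDerivAt
  have hDF : ∀ u : ℝ, HasDerivAt (fun u => EllF u k)
      (1 / Real.sqrt (1 - k ^ 2 * Real.sin u ^ 2)) u :=
    fun u => (hcontF.integral_hasStrictDerivAt 0 u).hasDerivAt
  -- cos ≠ 0 on the open interval
  have hcos : ∀ u ∈ Set.Ioo a b, Real.cos u ≠ 0 := by
    intro u hu h
    rw [Real.cos_eq_zero_iff] at h
    obtain ⟨m, rfl⟩ := h
    obtain ⟨h1, h2⟩ := hu
    rw [ha] at h1; rw [hb] at h2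
    rw [mul_div_assoc, mul_div_assoc] at h1 h2
    have h2π : (0:ℝ) < π / 2 := by positivity
    have h1' := (mul_lt_mul_iff_left₀ h2π).mp h1
    have h2' := (mul_lt_mul_iff_left₀ h2π).mp h2
    have hm1 : (n:ℝ) - 1 < (m:ℝ) := by linarith
    have hm2 : (m:ℝ) < (n:ℝ) := by linarith
    have hm1' : n - 1 < m := by exact_mod_cast hm1
    have hm2' : m < n := by exact_mod_cast hm2
    omega
  -- derivative of g on the interval
  have hDg : ∀ u ∈ Set.Ioo a b,
      HasDerivAt g ((1 - k ^ 2) / (Real.sqrt (1 - k ^ 2 * Real.sin u ^ 2) * Real.cos u ^ 2)) u := by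
    intro u hu
    have hc := hcos u hu
    have hinner : HasDerivAt (fun u : ℝ => 1 - k ^ 2 * Real.sin u ^ 2)
        (-(k ^ 2 * (2 * Real.sin u ^ 1 * Real.cos u))) u :=
      (((Real.hasDerivAt_sin u).pow 2).const_mul (k ^ 2)).const_sub 1
    have hw' : HasDerivAt (fun u : ℝ => Real.sqrt (1 - k ^ 2 * Real.sin u ^ 2))
        (-(k ^ 2 * (2 * Real.sin u ^ 1 * Real.cos u)) /
          (2 * Real.sqrt (1 - k ^ 2 * Real.sin u ^ 2))) u :=
      hinner.sqrt (hpos u).ne'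
    have htan := Real.hasDerivAt_tan hc
    have hD := ((hDE u).neg.add ((hDF u).const_mul (1 - k ^ 2))).add (htan.mul hw')
    refine hD.congr_deriv ?_
    symm
    have hw := hwpos u
    have hsq := Real.sq_sqrt (hpos u).le
    have hpy := Real.sin_sq_add_cos_sq u
    rw [Real.tan_eq_sin_div_cos]
    field_simp
    linear_combination (Real.cos u ^ 2 - 1) * hsq + k ^ 2 * hpy
  -- strict monotonicity
  have hmono : StrictMonoOn g (Set.Ioo a b) := by
    apply strictMonoOn_of_deriv_pos (convex_Ioo a b)
    · exact fun u hu => ((hDg u hu).continuousAt).continuousWithinAt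
    · intro x hx
      rw [interior_Ioo] at hx
      rw [(hDg x hx).deriv]
      have := hwpos x
      have hc := hcos x hx
      have : 0 < Real.cos x ^ 2 := by positivity
      have : 0 < 1 - k ^ 2 := by nlinarith
      positivity
  -- continuity of the "integral" part
  have hcontI : Continuous fun u : ℝ => -EllE u k + (1 - k ^ 2) * EllF u k :=
    ((continuous_iff_continuousAt.mpr fun u => (hDE u).continuousAt).neg).add
      (continuous_const.mul (continuous_iff_continuousAt.mpr fun u => (hDF u).continuousAt))
  -- limits of tan at the endpoints, via periodicity
  have hmapa : Tendsto (fun u : ℝ => u - (n:ℝ) * π) (nhdsWithin a (Set.Ioi a))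
      (nhdsWithin (-(π / 2)) (Set.Ioi (-(π / 2)))) := by
    have h1 : Tendsto (fun u : ℝ => u - (n:ℝ) * π) (nhdsWithin a (Set.Ioi a))
        (nhds (a - (n:ℝ) * π)) :=
      ((continuous_id.sub continuous_const).tendsto a).mono_left nhdsWithin_le_nhds
    have ha' : a - (n:ℝ) * π = -(π / 2) := by rw [ha]; ring
    rw [ha'] at h1
    refine tendsto_nhdsWithin_of_tendsto_nhds_of_eventually_within _ h1 ?_
    filter_upwards [self_mem_nhdsWithin] with x hx
    simp only [Set.mem_Ioi] at hx ⊢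
    rw [ha] at hx; linarith
  have hmapb : Tendsto (fun u : ℝ => u - (n:ℝ) * π) (nhdsWithin b (Set.Iio b))
      (nhdsWithin (π / 2) (Set.Iio (π / 2))) := by
    have h1 : Tendsto (fun u : ℝ => u - (n:ℝ) * π) (nhdsWithin b (Set.Iio b))
        (nhds (b - (n:ℝ) * π)) :=
      ((continuous_id.sub continuous_const).tendsto b).mono_left nhdsWithin_le_nhds
    have hb' : b - (n:ℝ) * π = π / 2 := by rw [hb]; ring
    rw [hb'] at h1
    refine tendsto_nhdsWithin_of_tendsto_nhds_of_eventually_within _ h1 ?_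
    filter_upwards [self_mem_nhdsWithin] with x hx
    simp only [Set.mem_Iio] at hx ⊢
    rw [hb] at hx; linarith
  have htana : Tendsto Real.tan (nhdsWithin a (Set.Ioi a)) atBot := by
    have := Real.tendsto_tan_neg_pi_div_two.comp hmapa
    refine this.congr fun u => ?_
    exact Real.tan_periodic.sub_int_mul_eq n
  have htanb : Tendsto Real.tan (nhdsWithin b (Set.Iio b)) atTop := by
    have := Real.tendsto_tan_pi_div_two.comp hmapb
    refine this.congr fun u => ?_
    exact Real.tan_periodic.sub_int_mul_eq n
  -- limits of the sqrt factor at the endpoints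
  have hkk : (0:ℝ) < Real.sqrt (1 - k ^ 2) := Real.sqrt_pos.mpr (by nlinarith)
  have hwa : Tendsto (fun u : ℝ => Real.sqrt (1 - k ^ 2 * Real.sin u ^ 2))
      (nhdsWithin a (Set.Ioi a)) (nhds (Real.sqrt (1 - k ^ 2))) := by
    have hca : Real.cos a = 0 := Real.cos_eq_zero_iff.mpr ⟨n - 1, by rw [ha]; push_cast; ring⟩
    have hsa : Real.sin a ^ 2 = 1 := by nlinarith [Real.sin_sq_add_cos_sq a]
    have := (hcontw.tendsto a).mono_left (nhdsWithin_le_nhds (s := Set.Ioi a))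
    rwa [show 1 - k ^ 2 * Real.sin a ^ 2 = 1 - k ^ 2 by rw [hsa]; ring] at this
  have hwb : Tendsto (fun u : ℝ => Real.sqrt (1 - k ^ 2 * Real.sin u ^ 2))
      (nhdsWithin b (Set.Iio b)) (nhds (Real.sqrt (1 - k ^ 2))) := by
    have hcb : Real.cos b = 0 := Real.cos_eq_zero_iff.mpr ⟨n, by rw [hb]⟩
    have hsb : Real.sin b ^ 2 = 1 := by nlinarith [Real.sin_sq_add_cos_sq b]
    have := (hcontw.tendsto b).mono_left (nhdsWithin_le_nhds (s := Set.Iio b))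
    rwa [show 1 - k ^ 2 * Real.sin b ^ 2 = 1 - k ^ 2 by rw [hsb]; ring] at this
  -- continuity of the integral part
  have hcontI : Tendsto (fun u : ℝ => -EllE u k + (1 - k ^ 2) * EllF u k) (nhds a) (nhds (-EllE a k + (1 - k ^ 2) * EllF a k)) :=
    (((hDE a).continuousAt.neg).add ((hDF a).continuousAt.const_mul (1 - k ^ 2)))
  have hcontIb : Tendsto (fun u : ℝ => -EllE u k + (1 - k ^ 2) * EllF u k) (nhds b) (nhds (-EllE b k + (1 - k ^ 2) * EllF b k)) :=
    (((hDE b).continuousAt.neg).add ((hDF b).continuousAt.const_mul (1 - k ^ 2)))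
  refine ⟨hmono, ?_, ?_⟩
  · exact (hcontI.mono_left nhdsWithin_le_nhds).add_atBot (htana.atBot_mul_pos hkk hwa)
  · exact (hcontIb.mono_left nhdsWithin_le_nhds).add_atTop (htanb.atTop_mul_pos hkk hwb)
end

section
/- There are no u > 0 and k ∈ (0,1) satisfying simultaneously the two equations E(u,k)·cos u = √(1−k²sin²u)·sin u and F(u,k)·√(1−k²sin²u)·cos u = sin u. (Incompatibility of the system f₁(p,k) = 0, J = 0 after the substitution p = am(u,k); this lemma yields the upper bound 2p₁¹(k) on the first conjugate time.) -/
open Real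

section Aux
variable {k : ℝ}

lemma aux_pos (hk1 : k < 1) (hk0 : 0 < k) (t : ℝ) : 0 < 1 - k ^ 2 * Real.sin t ^ 2 := by
  nlinarith [sin_sq_le_one t, sq_nonneg (Real.sin t), sq_nonneg k]

lemma del_pos (hk1 : k < 1) (hk0 : 0 < k) (t : ℝ) :
    0 < Real.sqrt (1 - k ^ 2 * Real.sin t ^ 2) :=
  Real.sqrt_pos.mpr (aux_pos hk1 hk0 t)

lemma del_sq (hk1 : k < 1) (hk0 : 0 < k) (t : ℝ) :
    Real.sqrt (1 - k ^ 2 * Real.sin t ^ 2) ^ 2 = 1 - k ^ 2 * Real.sin t ^ 2 :=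
  Real.sq_sqrt (aux_pos hk1 hk0 t).le

lemma del_continuous : Continuous (fun t => Real.sqrt (1 - k ^ 2 * Real.sin t ^ 2)) := by
  continuity

lemma del_inv_continuous (hk1 : k < 1) (hk0 : 0 < k) :
    Continuous (fun t => 1 / Real.sqrt (1 - k ^ 2 * Real.sin t ^ 2)) :=
  continuous_const.div del_continuous (fun t => (del_pos hk1 hk0 t).ne')

lemma del_intble (a b : ℝ) :
    IntervalIntegrable (fun t => Real.sqrt (1 - k ^ 2 * Real.sin t ^ 2)) MeasureTheory.volume a b :=
  del_continuous.intervalIntegrable a b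

lemma del_inv_intble (hk1 : k < 1) (hk0 : 0 < k) (a b : ℝ) :
    IntervalIntegrable (fun t => 1 / Real.sqrt (1 - k ^ 2 * Real.sin t ^ 2))
      MeasureTheory.volume a b :=
  (del_inv_continuous hk1 hk0).intervalIntegrable a b

lemma sin_sq_pi (t : ℝ) : Real.sin (t + π) ^ 2 = Real.sin t ^ 2 := by
  rw [Real.sin_add_pi]; ring

lemma del_periodic : Function.Periodic (fun t => Real.sqrt (1 - k ^ 2 * Real.sin t ^ 2)) π := by
  intro t; simp [sin_sq_pi]

lemma del_inv_periodic :
    Function.Periodic (fun t => 1 / Real.sqrt (1 - k ^ 2 * Real.sin t ^ 2)) π := by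
  intro t; simp [sin_sq_pi]

/-- For a π-periodic, reflection-symmetric integrable function,
`∫₀^{v+nπ} = ∫₀^v + n·(2∫₀^{π/2})`. -/
lemma periodic_reduction {f : ℝ → ℝ} (hper : Function.Periodic f π)
    (hsym : ∀ t, f (π - t) = f t)
    (hint : ∀ a b : ℝ, IntervalIntegrable f MeasureTheory.volume a b) (v : ℝ) (n : ℤ) :
    ∫ t in (0:ℝ)..(v + n * π), f t =
      (∫ t in (0:ℝ)..v, f t) + n * (2 * ∫ t in (0:ℝ)..(π/2), f t) := by
  have h1 : ∫ t in (0:ℝ)..(v + n * π), f t =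
      (∫ t in (0:ℝ)..v, f t) + ∫ t in v..(v + n * π), f t :=
    (intervalIntegral.integral_add_adjacent_intervals (hint 0 v) (hint v _)).symm
  have h2 : ∫ t in v..(v + n * π), f t = n * ∫ t in (0:ℝ)..π, f t := by
    have h := hper.intervalIntegral_add_zsmul_eq n v hint
    rw [show ((n:ℝ) * π) = n • π by simp, h, hper.intervalIntegral_add_eq v 0, zsmul_eq_mul]
    norm_num
  have h3 : ∫ t in (0:ℝ)..π, f t = 2 * ∫ t in (0:ℝ)..(π/2), f t := by
    have hsplit : ∫ t in (0:ℝ)..π, f t =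
        (∫ t in (0:ℝ)..(π/2), f t) + ∫ t in (π/2)..π, f t :=
      (intervalIntegral.integral_add_adjacent_intervals (hint 0 (π/2)) (hint (π/2) π)).symm
    have hrefl : ∫ t in (π/2)..π, f t = ∫ t in (0:ℝ)..(π/2), f t := by
      have h := intervalIntegral.integral_comp_sub_left (a := (0:ℝ)) (b := π/2) f π
      rw [sub_zero, show π - π/2 = π/2 by ring] at h
      rw [← h]
      exact intervalIntegral.integral_congr (fun t _ => hsym t)
    rw [hsplit, hrefl]; ring
  rw [h1, h2, h3]

/-- derivative of `Δ(t)·tan t`. -/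
lemma hasDeriv1 (hk1 : k < 1) (hk0 : 0 < k) {t : ℝ} (hc : Real.cos t ≠ 0) :
    HasDerivAt (fun x => Real.sqrt (1 - k ^ 2 * Real.sin x ^ 2) * Real.tan x)
      ((1 - k ^ 2) * Real.sin t ^ 2 /
          (Real.cos t ^ 2 * Real.sqrt (1 - k ^ 2 * Real.sin t ^ 2)) +
        Real.sqrt (1 - k ^ 2 * Real.sin t ^ 2)) t := by
  have hs : HasDerivAt Real.sin (Real.cos t) t := Real.hasDerivAt_sin t
  have hinner : HasDerivAt (fun x => 1 - k ^ 2 * Real.sin x ^ 2)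
      (-(k ^ 2 * (2 * Real.sin t ^ 1 * Real.cos t))) t :=
    ((hs.pow 2).const_mul (k ^ 2)).const_sub 1
  have hsqrt := hinner.sqrt (aux_pos hk1 hk0 t).ne'
  have htan : HasDerivAt Real.tan (1 / Real.cos t ^ 2) t := Real.hasDerivAt_tan hc
  have h := hsqrt.mul htan
  refine h.congr_deriv ?_
  symm
  have hd2 := del_sq hk1 hk0 t
  have hd0 := (del_pos hk1 hk0 t).ne'
  have hsc := Real.sin_sq_add_cos_sq t
  rw [Real.tan_eq_sin_div_cos]
  set D := Real.sqrt (1 - k ^ 2 * Real.sin t ^ 2) with hD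
  field_simp
  linear_combination (Real.cos t ^ 2 - 1) * hd2 + hsc

/-- derivative of `tan t / Δ(t)`. -/
lemma hasDeriv2 (hk1 : k < 1) (hk0 : 0 < k) {t : ℝ} (hc : Real.cos t ≠ 0) :
    HasDerivAt (fun x => Real.tan x / Real.sqrt (1 - k ^ 2 * Real.sin x ^ 2))
      (Real.sin t ^ 2 * ((1 - k ^ 2 * Real.sin t ^ 2) + k ^ 2 * Real.cos t ^ 2) /
          (Real.cos t ^ 2 * Real.sqrt (1 - k ^ 2 * Real.sin t ^ 2) ^ 3) +
        1 / Real.sqrt (1 - k ^ 2 * Real.sin t ^ 2)) t := by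
  have hs : HasDerivAt Real.sin (Real.cos t) t := Real.hasDerivAt_sin t
  have hinner : HasDerivAt (fun x => 1 - k ^ 2 * Real.sin x ^ 2)
      (-(k ^ 2 * (2 * Real.sin t ^ 1 * Real.cos t))) t :=
    ((hs.pow 2).const_mul (k ^ 2)).const_sub 1
  have hsqrt := hinner.sqrt (aux_pos hk1 hk0 t).ne'
  have htan : HasDerivAt Real.tan (1 / Real.cos t ^ 2) t := Real.hasDerivAt_tan hc
  have h := htan.div hsqrt (del_pos hk1 hk0 t).ne'
  refine h.congr_deriv ?_
  symm
  have hd2 := del_sq hk1 hk0 t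
  have hd0 := (del_pos hk1 hk0 t).ne'
  have hsc := Real.sin_sq_add_cos_sq t
  rw [Real.tan_eq_sin_div_cos]
  set D := Real.sqrt (1 - k ^ 2 * Real.sin t ^ 2) with hD
  field_simp
  linear_combination (Real.cos t ^ 2 - 1) * hd2 + (1 - k ^ 2 * Real.sin t ^ 2) * hsc

lemma cos_pos_on (v : ℝ) (hv2 : -(π/2) < v) (hv : v < π/2) :
    ∀ t ∈ Set.uIcc (0:ℝ) v, 0 < Real.cos t := by
  intro t ht
  rcases le_or_gt 0 v with h0 | h0
  · rw [Set.uIcc_of_le h0] at ht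
    exact Real.cos_pos_of_mem_Ioo ⟨by linarith [ht.1, Real.pi_pos], lt_of_le_of_lt ht.2 hv⟩
  · rw [Set.uIcc_of_ge h0.le] at ht
    exact Real.cos_pos_of_mem_Ioo ⟨by linarith [ht.1], by linarith [ht.2, Real.pi_pos]⟩

lemma g1_continuousOn (hk1 : k < 1) (hk0 : 0 < k) {v : ℝ} (hv2 : -(π/2) < v) (hv : v < π/2) :
    ContinuousOn (fun t => (1 - k ^ 2) * Real.sin t ^ 2 /
      (Real.cos t ^ 2 * Real.sqrt (1 - k ^ 2 * Real.sin t ^ 2))) (Set.uIcc 0 v) := by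
  apply ContinuousOn.div
  · fun_prop
  · fun_prop
  · intro t ht
    have hc := cos_pos_on v hv2 hv t ht
    have hd := del_pos hk1 hk0 t
    positivity

lemma g2_continuousOn (hk1 : k < 1) (hk0 : 0 < k) {v : ℝ} (hv2 : -(π/2) < v) (hv : v < π/2) :
    ContinuousOn (fun t => Real.sin t ^ 2 * ((1 - k ^ 2 * Real.sin t ^ 2) + k ^ 2 * Real.cos t ^ 2) /
      (Real.cos t ^ 2 * Real.sqrt (1 - k ^ 2 * Real.sin t ^ 2) ^ 3)) (Set.uIcc 0 v) := by
  apply ContinuousOn.div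
  · fun_prop
  · fun_prop
  · intro t ht
    have hc := cos_pos_on v hv2 hv t ht
    have hd := del_pos hk1 hk0 t
    positivity

/-- FTC identity for the first kind. -/
lemma ftc_E (hk1 : k < 1) (hk0 : 0 < k) {v : ℝ} (hv2 : -(π/2) < v) (hv : v < π/2) :
    Real.sqrt (1 - k ^ 2 * Real.sin v ^ 2) * Real.tan v - EllE v k =
      ∫ t in (0:ℝ)..v, (1 - k ^ 2) * Real.sin t ^ 2 /
        (Real.cos t ^ 2 * Real.sqrt (1 - k ^ 2 * Real.sin t ^ 2)) := by
  have hcos := cos_pos_on v hv2 hv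
  have hg1 : IntervalIntegrable (fun t => (1 - k ^ 2) * Real.sin t ^ 2 /
      (Real.cos t ^ 2 * Real.sqrt (1 - k ^ 2 * Real.sin t ^ 2))) MeasureTheory.volume 0 v :=
    (g1_continuousOn hk1 hk0 hv2 hv).intervalIntegrable
  have h := intervalIntegral.integral_eq_sub_of_hasDerivAt
    (f := fun x => Real.sqrt (1 - k ^ 2 * Real.sin x ^ 2) * Real.tan x)
    (fun t ht => hasDeriv1 hk1 hk0 (hcos t ht).ne') (hg1.add (del_intble 0 v))
  rw [intervalIntegral.integral_add hg1 (del_intble 0 v)] at h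
  simp only [Real.sin_zero, Real.tan_zero, mul_zero, sub_zero] at h
  have : EllE v k = ∫ t in (0:ℝ)..v, Real.sqrt (1 - k ^ 2 * Real.sin t ^ 2) := rfl
  linarith [h]

/-- FTC identity for the second kind. -/
lemma ftc_F (hk1 : k < 1) (hk0 : 0 < k) {v : ℝ} (hv2 : -(π/2) < v) (hv : v < π/2) :
    Real.tan v / Real.sqrt (1 - k ^ 2 * Real.sin v ^ 2) - EllF v k =
      ∫ t in (0:ℝ)..v, Real.sin t ^ 2 * ((1 - k ^ 2 * Real.sin t ^ 2) + k ^ 2 * Real.cos t ^ 2) /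
        (Real.cos t ^ 2 * Real.sqrt (1 - k ^ 2 * Real.sin t ^ 2) ^ 3) := by
  have hcos := cos_pos_on v hv2 hv
  have hg2 : IntervalIntegrable (fun t => Real.sin t ^ 2 *
      ((1 - k ^ 2 * Real.sin t ^ 2) + k ^ 2 * Real.cos t ^ 2) /
      (Real.cos t ^ 2 * Real.sqrt (1 - k ^ 2 * Real.sin t ^ 2) ^ 3)) MeasureTheory.volume 0 v :=
    (g2_continuousOn hk1 hk0 hv2 hv).intervalIntegrable
  have h := intervalIntegral.integral_eq_sub_of_hasDerivAt
    (f := fun x => Real.tan x / Real.sqrt (1 - k ^ 2 * Real.sin x ^ 2))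
    (fun t ht => hasDeriv2 hk1 hk0 (hcos t ht).ne') (hg2.add (del_inv_intble hk1 hk0 0 v))
  rw [intervalIntegral.integral_add hg2 (del_inv_intble hk1 hk0 0 v)] at h
  simp only [Real.tan_zero, zero_div] at h
  have : EllF v k = ∫ t in (0:ℝ)..v, 1 / Real.sqrt (1 - k ^ 2 * Real.sin t ^ 2) := rfl
  linarith [h]

/-- The complete elliptic integrals satisfy `(1−k²)K < E`. -/
lemma complete_ineq (hk1 : k < 1) (hk0 : 0 < k) :
    (1 - k ^ 2) * EllF (π/2) k < EllE (π/2) k := by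
  have hsub : EllE (π/2) k - (1 - k ^ 2) * EllF (π/2) k =
      ∫ t in (0:ℝ)..(π/2), (Real.sqrt (1 - k ^ 2 * Real.sin t ^ 2) -
        (1 - k ^ 2) * (1 / Real.sqrt (1 - k ^ 2 * Real.sin t ^ 2))) := by
    rw [intervalIntegral.integral_sub (del_intble 0 (π/2))
      (((del_inv_intble hk1 hk0 0 (π/2))).const_mul _),
      intervalIntegral.integral_const_mul]
    rfl
  have hpos : 0 < ∫ t in (0:ℝ)..(π/2), (Real.sqrt (1 - k ^ 2 * Real.sin t ^ 2) -
      (1 - k ^ 2) * (1 / Real.sqrt (1 - k ^ 2 * Real.sin t ^ 2))) := by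
    apply intervalIntegral.integral_pos (by positivity)
    · exact (del_continuous.sub (continuous_const.mul
        (del_inv_continuous hk1 hk0))).continuousOn
    · intro t _
      have hd := del_pos hk1 hk0 t
      have hd2 := del_sq hk1 hk0 t
      rw [sub_nonneg, mul_one_div, div_le_iff₀ hd]
      have hdd : Real.sqrt (1 - k ^ 2 * Real.sin t ^ 2) * Real.sqrt (1 - k ^ 2 * Real.sin t ^ 2)
          = 1 - k ^ 2 * Real.sin t ^ 2 := by rw [← sq]; exact hd2
      rw [hdd]
      nlinarith [sin_sq_le_one t, sq_nonneg (Real.sin t), sq_nonneg k]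
    · refine ⟨0, ⟨le_refl 0, by positivity⟩, ?_⟩
      simp only [Real.sin_zero]
      norm_num
      positivity
  linarith

end Aux

set_option maxHeartbeats 1000000 in
/-- There are no `u > 0` and `k ∈ (0,1)` satisfying simultaneously
`E(u,k)·cos u = √(1 − k² sin² u)·sin u` and
`F(u,k)·√(1 − k² sin² u)·cos u = sin u`
(incompatibility of the system `f₁(p,k) = 0`, `J = 0` after the substitution `p = am(u,k)`). -/
theorem incompatibility (u k : ℝ) (hu : 0 < u) (hk : k ∈ Set.Ioo (0:ℝ) 1) :
    ¬ (EllE u k * Real.cos u = Real.sqrt (1 - k ^ 2 * Real.sin u ^ 2) * Real.sin u ∧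
       EllF u k * Real.sqrt (1 - k ^ 2 * Real.sin u ^ 2) * Real.cos u = Real.sin u) := by
  obtain ⟨hk0, hk1⟩ := hk
  rintro ⟨h1, h2⟩
  have hπ := Real.pi_pos
  have hΔu : 0 < Real.sqrt (1 - k ^ 2 * Real.sin u ^ 2) := del_pos hk1 hk0 u
  have hF : 0 < EllF u k := by
    apply intervalIntegral.intervalIntegral_pos_of_pos (del_inv_intble hk1 hk0 0 u)
      (fun x => one_div_pos.mpr (del_pos hk1 hk0 x)) hu
  have hsc := Real.sin_sq_add_cos_sq u
  have hsin : Real.sin u ≠ 0 := by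
    intro h0
    have hc0 : Real.cos u = 0 := by
      have h2' : EllF u k * Real.sqrt (1 - k ^ 2 * Real.sin u ^ 2) * Real.cos u = 0 := by
        rw [h2, h0]
      rcases mul_eq_zero.mp h2' with h | h
      · rcases mul_eq_zero.mp h with h' | h'
        · exact absurd h' hF.ne'
        · exact absurd h' hΔu.ne'
      · exact h
    rw [h0, hc0] at hsc; norm_num at hsc
  have hcos : Real.cos u ≠ 0 := by
    intro h0
    rw [h0, mul_zero] at h1
    rcases mul_eq_zero.mp h1.symm with h | h
    · exact hΔu.ne' h
    · exact hsin h
  have htan : Real.tan u = EllF u k * Real.sqrt (1 - k ^ 2 * Real.sin u ^ 2) := by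
    rw [Real.tan_eq_sin_div_cos]
    conv_lhs => rw [← h2]
    exact mul_div_cancel_right₀ _ hcos
  have hEtan : EllE u k = Real.sqrt (1 - k ^ 2 * Real.sin u ^ 2) * Real.tan u := by
    rw [Real.tan_eq_sin_div_cos, mul_div_assoc', eq_div_iff hcos]
    exact h1
  -- decompose u = v + n·π with v ∈ [0, π)
  set n : ℤ := ⌊u / π⌋ with hn
  set v : ℝ := u - n * π with hvdef
  have huv : u = v + n * π := by rw [hvdef]; ring
  have hfr : v = π * Int.fract (u / π) := by
    rw [hvdef, Int.fract, ← hn]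
    field_simp
  have hv0 : 0 ≤ v := by rw [hfr]; exact mul_nonneg hπ.le (Int.fract_nonneg _)
  have hvπ : v < π := by
    rw [hfr]
    calc π * Int.fract (u / π) < π * 1 := mul_lt_mul_of_pos_left (Int.fract_lt_one _) hπ
      _ = π := mul_one π
  have hneg1 : ((-1 : ℝ) ^ n) ^ 2 = 1 := by
    rcases Int.even_or_odd n with h | h
    · rw [h.neg_one_zpow]; norm_num
    · rw [h.neg_one_zpow]; norm_num
  have hsin2 : Real.sin u ^ 2 = Real.sin v ^ 2 := by
    rw [huv, Real.sin_add_int_mul_pi, mul_pow, hneg1, one_mul]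
  have hΔuv : Real.sqrt (1 - k ^ 2 * Real.sin u ^ 2) =
      Real.sqrt (1 - k ^ 2 * Real.sin v ^ 2) := by rw [hsin2]
  have htanv : Real.tan u = Real.tan v := by
    rw [huv]; exact (Real.tan_periodic.int_mul n) v
  have hsinv : Real.sin v ≠ 0 := by
    intro h0
    apply hsin
    have h2' : Real.sin u ^ 2 = 0 := by rw [hsin2, h0]; ring
    exact (pow_eq_zero_iff (two_ne_zero)).mp h2'
  have hcosv : Real.cos v ≠ 0 := by
    intro h0
    apply hcos
    rw [huv, Real.cos_add_int_mul_pi, h0, mul_zero]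
  have hv0' : 0 < v := hv0.lt_of_ne fun h => hsinv (by rw [← h]; simp)
  have htanpos : 0 < Real.tan u := by rw [htan]; exact mul_pos hF hΔu
  have hvhalf : v < π / 2 := by
    by_contra hge
    push_neg at hge
    have hlt2 : π / 2 < v := lt_of_le_of_ne hge fun h => hcosv (by rw [← h]; simp)
    have hsv : 0 < Real.sin v := Real.sin_pos_of_pos_of_lt_pi (by linarith) hvπ
    have hcv : Real.cos v < 0 := Real.cos_neg_of_pi_div_two_lt_of_lt hlt2 (by linarith)
    have : Real.tan v < 0 := by
      rw [Real.tan_eq_sin_div_cos]; exact div_neg_of_pos_of_neg hsv hcv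
    rw [htanv] at htanpos
    linarith
  have hv2 : -(π / 2) < v := by linarith
  -- periodic reduction of the elliptic integrals
  have hEu : EllE u k = EllE v k + n * (2 * EllE (π / 2) k) := by
    rw [huv]
    exact periodic_reduction del_periodic (fun t => by simp [Real.sin_pi_sub]) del_intble v n
  have hFu : EllF u k = EllF v k + n * (2 * EllF (π / 2) k) := by
    rw [huv]
    exact periodic_reduction del_inv_periodic (fun t => by simp [Real.sin_pi_sub])
      (del_inv_intble hk1 hk0) v n
  -- the two scalar equations in terms of v
  have hI1 : Real.sqrt (1 - k ^ 2 * Real.sin v ^ 2) * Real.tan v - EllE v k =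
      n * (2 * EllE (π / 2) k) := by
    have h := hEtan
    rw [hEu, hΔuv, htanv] at h
    linarith
  have hI2 : Real.tan v / Real.sqrt (1 - k ^ 2 * Real.sin v ^ 2) - EllF v k =
      n * (2 * EllF (π / 2) k) := by
    have h := htan
    rw [hFu, hΔuv, htanv] at h
    rw [h, mul_div_cancel_right₀ _ (del_pos hk1 hk0 v).ne']
    ring
  have hJ1 := ftc_E hk1 hk0 hv2 hvhalf (k := k) (v := v)
  have hJ2 := ftc_F hk1 hk0 hv2 hvhalf (k := k) (v := v)
  have e1 : (∫ t in (0:ℝ)..v, (1 - k ^ 2) * Real.sin t ^ 2 /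
      (Real.cos t ^ 2 * Real.sqrt (1 - k ^ 2 * Real.sin t ^ 2))) =
      n * (2 * EllE (π / 2) k) := by rw [← hJ1]; exact hI1
  have e2 : (∫ t in (0:ℝ)..v, Real.sin t ^ 2 *
      ((1 - k ^ 2 * Real.sin t ^ 2) + k ^ 2 * Real.cos t ^ 2) /
      (Real.cos t ^ 2 * Real.sqrt (1 - k ^ 2 * Real.sin t ^ 2) ^ 3)) =
      n * (2 * EllF (π / 2) k) := by rw [← hJ2]; exact hI2
  -- complete integrals
  have hcomp := complete_ineq hk1 hk0
  have hK0 : 0 < EllF (π / 2) k := by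
    apply intervalIntegral.intervalIntegral_pos_of_pos (del_inv_intble hk1 hk0 0 (π / 2))
      (fun x => one_div_pos.mpr (del_pos hk1 hk0 x)) (by positivity)
  have hk2 : k ^ 2 < 1 := by nlinarith [sq_nonneg k]
  have hE0 : 0 < EllE (π / 2) k :=
    lt_trans (mul_pos (show (0:ℝ) < 1 - k ^ 2 by linarith) hK0) hcomp
  -- pointwise strict inequality
  have key : ∀ t : ℝ, 0 < Real.sin t → 0 < Real.cos t →
      EllF (π / 2) k * ((1 - k ^ 2) * Real.sin t ^ 2 /
        (Real.cos t ^ 2 * Real.sqrt (1 - k ^ 2 * Real.sin t ^ 2))) <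
      EllE (π / 2) k * (Real.sin t ^ 2 *
        ((1 - k ^ 2 * Real.sin t ^ 2) + k ^ 2 * Real.cos t ^ 2) /
        (Real.cos t ^ 2 * Real.sqrt (1 - k ^ 2 * Real.sin t ^ 2) ^ 3)) := by
    intro t hs hc
    have hd := del_pos hk1 hk0 t
    have hd2 := del_sq hk1 hk0 t
    have hA : 0 < 1 - k ^ 2 * Real.sin t ^ 2 := aux_pos hk1 hk0 t
    have key2 : EllF (π / 2) k * (1 - k ^ 2) * (1 - k ^ 2 * Real.sin t ^ 2) <
        EllE (π / 2) k * ((1 - k ^ 2 * Real.sin t ^ 2) + k ^ 2 * Real.cos t ^ 2) := by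
      calc EllF (π / 2) k * (1 - k ^ 2) * (1 - k ^ 2 * Real.sin t ^ 2)
          = (1 - k ^ 2) * EllF (π / 2) k * (1 - k ^ 2 * Real.sin t ^ 2) := by ring
        _ < EllE (π / 2) k * (1 - k ^ 2 * Real.sin t ^ 2) :=
            mul_lt_mul_of_pos_right hcomp hA
        _ ≤ EllE (π / 2) k * ((1 - k ^ 2 * Real.sin t ^ 2) + k ^ 2 * Real.cos t ^ 2) := by
            apply mul_le_mul_of_nonneg_left _ hE0.le
            have : (0:ℝ) ≤ k ^ 2 * Real.cos t ^ 2 := by positivity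
            linarith
    rw [mul_div_assoc', mul_div_assoc',
      div_lt_div_iff₀ (by positivity) (by positivity),
      show Real.sqrt (1 - k ^ 2 * Real.sin t ^ 2) ^ 3 =
        (1 - k ^ 2 * Real.sin t ^ 2) * Real.sqrt (1 - k ^ 2 * Real.sin t ^ 2) from by
          rw [pow_succ, hd2]]
    have hpos : (0:ℝ) < Real.sin t ^ 2 * Real.cos t ^ 2 *
        Real.sqrt (1 - k ^ 2 * Real.sin t ^ 2) := by positivity
    have h6 := mul_lt_mul_of_pos_right key2 hpos
    calc EllF (π / 2) k * ((1 - k ^ 2) * Real.sin t ^ 2) *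
          (Real.cos t ^ 2 * ((1 - k ^ 2 * Real.sin t ^ 2) *
            Real.sqrt (1 - k ^ 2 * Real.sin t ^ 2)))
        = EllF (π / 2) k * (1 - k ^ 2) * (1 - k ^ 2 * Real.sin t ^ 2) *
          (Real.sin t ^ 2 * Real.cos t ^ 2 *
            Real.sqrt (1 - k ^ 2 * Real.sin t ^ 2)) := by ring
      _ < EllE (π / 2) k * ((1 - k ^ 2 * Real.sin t ^ 2) + k ^ 2 * Real.cos t ^ 2) *
          (Real.sin t ^ 2 * Real.cos t ^ 2 *
            Real.sqrt (1 - k ^ 2 * Real.sin t ^ 2)) := h6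
      _ = EllE (π / 2) k * (Real.sin t ^ 2 *
            ((1 - k ^ 2 * Real.sin t ^ 2) + k ^ 2 * Real.cos t ^ 2)) *
          (Real.cos t ^ 2 * Real.sqrt (1 - k ^ 2 * Real.sin t ^ 2)) := by ring
  -- strict integral inequality
  have hg1c : ContinuousOn (fun t => (1 - k ^ 2) * Real.sin t ^ 2 /
      (Real.cos t ^ 2 * Real.sqrt (1 - k ^ 2 * Real.sin t ^ 2))) (Set.Icc 0 v) := by
    have h := g1_continuousOn hk1 hk0 hv2 hvhalf (k := k)
    rwa [Set.uIcc_of_le hv0] at h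
  have hg2c : ContinuousOn (fun t => Real.sin t ^ 2 *
      ((1 - k ^ 2 * Real.sin t ^ 2) + k ^ 2 * Real.cos t ^ 2) /
      (Real.cos t ^ 2 * Real.sqrt (1 - k ^ 2 * Real.sin t ^ 2) ^ 3)) (Set.Icc 0 v) := by
    have h := g2_continuousOn hk1 hk0 hv2 hvhalf (k := k)
    rwa [Set.uIcc_of_le hv0] at h
  have hlt : EllF (π / 2) k * (∫ t in (0:ℝ)..v, (1 - k ^ 2) * Real.sin t ^ 2 /
      (Real.cos t ^ 2 * Real.sqrt (1 - k ^ 2 * Real.sin t ^ 2))) <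
      EllE (π / 2) k * (∫ t in (0:ℝ)..v, Real.sin t ^ 2 *
      ((1 - k ^ 2 * Real.sin t ^ 2) + k ^ 2 * Real.cos t ^ 2) /
      (Real.cos t ^ 2 * Real.sqrt (1 - k ^ 2 * Real.sin t ^ 2) ^ 3)) := by
    rw [← intervalIntegral.integral_const_mul, ← intervalIntegral.integral_const_mul]
    apply intervalIntegral.integral_lt_integral_of_continuousOn_of_le_of_exists_lt hv0'
    · exact continuousOn_const.mul hg1c
    · exact continuousOn_const.mul hg2c
    · intro t ht
      have hst : 0 < Real.sin t := Real.sin_pos_of_pos_of_lt_pi ht.1 (by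
        have := ht.2; linarith)
      have hct : 0 < Real.cos t := Real.cos_pos_of_mem_Ioo ⟨by linarith [ht.1], by
        have := ht.2; linarith⟩
      exact (key t hst hct).le
    · refine ⟨v, ⟨hv0, le_refl v⟩, ?_⟩
      have hsv : 0 < Real.sin v := Real.sin_pos_of_pos_of_lt_pi hv0' (by linarith)
      have hcv : 0 < Real.cos v := Real.cos_pos_of_mem_Ioo ⟨by linarith, hvhalf⟩
      exact key v hsv hcv
  rw [e1, e2] at hlt
  have heq : EllF (π / 2) k * (↑n * (2 * EllE (π / 2) k)) =
      EllE (π / 2) k * (↑n * (2 * EllF (π / 2) k)) := by ring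
  rw [heq] at hlt
  exact lt_irrefl _ hlt
end

section
/- There exists k̂ ∈ (0,1) such that for all k ∈ (0,k̂), all u ∈ ℝ with 0 < F(u,k) < π, and all v ∈ ℝ, one has J₁(u,v,k) > 0. (Positivity of the Jacobian numerator J₁ for small modulus k and p = F(u,k) ∈ (0,π).) -/
open Real

/-- The numerator `J₁(u,v,k) = −4k(α₁ + α₂ + α₃)` of the Jacobian of the exponential
mapping of the sub-Riemannian problem on SH(2), in Legendre variables `u = am(p,k)`,
`v = am(τ,k)`. -/
noncomputable def J₁ (u v k : ℝ) : ℝ :=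
  -4 * k *
    ((Real.sin u * Real.cos u * Real.sqrt (1 - k ^ 2 * Real.sin u ^ 2) *
        (2 * EllE u k - (1 - k ^ 2) * EllF u k)) +
     (-(1 - k ^ 2 * Real.sin u ^ 2) * Real.sin u ^ 2 -
        k ^ 2 * Real.sin u ^ 2 * Real.cos v ^ 2) +
     (EllE u k * (Real.sin u ^ 2 - Real.sin v ^ 2) *
        (EllE u k - (1 - k ^ 2) * EllF u k)))

namespace J1Aux

/-- Generic helper: a function vanishing at `0` with nonnegative derivative on `[0,b]`
is nonnegative on `[0,b]`. -/
lemma nonneg_of_hasDerivAt {f f' : ℝ → ℝ} (hf : ∀ x, HasDerivAt f (f' x) x)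
    (h0 : f 0 = 0) {b x : ℝ} (hx : x ∈ Set.Icc (0:ℝ) b)
    (hd : ∀ y ∈ Set.Icc (0:ℝ) b, 0 ≤ f' y) : 0 ≤ f x := by
  have hc : ContinuousOn f (Set.Icc (0:ℝ) b) := fun y _ =>
    (hf y).continuousAt.continuousWithinAt
  have hmono : MonotoneOn f (Set.Icc (0:ℝ) b) := by
    apply monotoneOn_of_deriv_nonneg (convex_Icc 0 b) hc
    · intro y hy
      exact (hf y).differentiableAt.differentiableWithinAt
    · intro y hy
      rw [interior_Icc] at hy
      rw [(hf y).deriv]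
      exact hd y ⟨hy.1.le, hy.2.le⟩
  have h0m : (0:ℝ) ∈ Set.Icc (0:ℝ) b := ⟨le_refl 0, hx.1.trans hx.2⟩
  have := hmono h0m hx hx.1
  linarith [this, h0.ge]

lemma sin_ge_half {x : ℝ} (h0 : 0 ≤ x) (h : x ≤ π / 2) : x / 2 ≤ Real.sin x := by
  have h1 := Real.mul_le_sin h0 h
  have h2 : π ≤ 4 := Real.pi_le_four
  have h3 : 0 < π := Real.pi_pos
  have h4 : x / 2 ≤ 2 / π * x := by
    rw [div_mul_eq_mul_div, le_div_iff₀ h3]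
    nlinarith
  linarith

/-- `sin x - x cos x ≥ x³/6` on `[0, π/2]`. -/
lemma sin_sub_mul_cos {x : ℝ} (h0 : 0 ≤ x) (h : x ≤ π / 2) :
    x ^ 3 / 6 ≤ Real.sin x - x * Real.cos x := by
  have key : ∀ y : ℝ, HasDerivAt (fun t => Real.sin t - t * Real.cos t - t ^ 3 / 6)
      (y * Real.sin y - y ^ 2 / 2) y := by
    intro y
    have h1 : HasDerivAt Real.sin (Real.cos y) y := Real.hasDerivAt_sin y
    have h2 : HasDerivAt (fun t : ℝ => t * Real.cos t)
        (1 * Real.cos y + y * (-Real.sin y)) y :=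
      (hasDerivAt_id y).mul (Real.hasDerivAt_cos y)
    have h3 : HasDerivAt (fun t : ℝ => t ^ 3 / 6) (3 * y ^ 2 / 6) y := by
      simpa using (hasDerivAt_pow 3 y).div_const 6
    have : HasDerivAt (fun t => Real.sin t - t * Real.cos t - t ^ 3 / 6)
        (Real.cos y - (1 * Real.cos y + y * -Real.sin y) - 3 * y ^ 2 / 6) y :=
      (h1.sub h2).sub h3
    convert this using 1
    ring
  have := nonneg_of_hasDerivAt key (by simp) (b := π / 2) ⟨h0, h⟩ ?_
  · linarith
  · intro y hy
    have hs := sin_ge_half hy.1 hy.2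
    nlinarith [hy.1]

/-- `x - sin x cos x ≤ 2x³/3` on `[0, ∞)` (stated for `x ∈ [0, b]`). -/
lemma mul_sub_sin_cos {x : ℝ} (h0 : 0 ≤ x) :
    x - Real.sin x * Real.cos x ≤ 2 * x ^ 3 / 3 := by
  have key : ∀ y : ℝ, HasDerivAt (fun t => 2 * t ^ 3 / 3 - t + Real.sin t * Real.cos t)
      (2 * y ^ 2 - 2 * Real.sin y ^ 2) y := by
    intro y
    have h1 : HasDerivAt (fun t : ℝ => 2 * t ^ 3 / 3) (2 * (3 * y ^ 2) / 3) y := by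
      simpa using ((hasDerivAt_pow 3 y).const_mul 2).div_const 3
    have h2 : HasDerivAt (fun t : ℝ => Real.sin t * Real.cos t)
        (Real.cos y * Real.cos y + Real.sin y * (-Real.sin y)) y :=
      (Real.hasDerivAt_sin y).mul (Real.hasDerivAt_cos y)
    have : HasDerivAt (fun t => 2 * t ^ 3 / 3 - t + Real.sin t * Real.cos t)
        (2 * (3 * y ^ 2) / 3 - 1 + (Real.cos y * Real.cos y + Real.sin y * (-Real.sin y))) y :=
      (h1.sub (hasDerivAt_id y)).add h2
    convert this using 1
    have hsc := Real.sin_sq_add_cos_sq y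
    ring_nf
    nlinarith [hsc]
  have := nonneg_of_hasDerivAt key (by simp) (b := x) ⟨h0, le_refl x⟩ ?_
  · linarith
  · intro y hy
    have h1 : Real.sin y ^ 2 ≤ y ^ 2 := by
      have hys : Real.sin y ≤ y := Real.sin_le hy.1
      have hys2 : -y ≤ Real.sin y := by
        rcases le_total y 1 with hy1 | hy1
        · have : 0 ≤ Real.sin y :=
            Real.sin_nonneg_of_nonneg_of_le_pi hy.1 (by nlinarith [Real.pi_gt_three])
          linarith
        · nlinarith [Real.neg_one_le_sin y]
      nlinarith
    linarith

section Integrals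

variable {k u : ℝ}

lemma g_cont (k : ℝ) : Continuous fun φ : ℝ => Real.sqrt (1 - k ^ 2 * Real.sin φ ^ 2) :=
  Real.continuous_sqrt.comp (by continuity)

lemma arg_ge (hk0 : 0 ≤ k) (hk7 : k ≤ 1 / 7) (φ : ℝ) :
    (1:ℝ) / 4 ≤ 1 - k ^ 2 * Real.sin φ ^ 2 := by
  nlinarith [Real.sin_sq_le_one φ, sq_nonneg (Real.sin φ), sq_nonneg k]

lemma g_ge_half (hk0 : 0 ≤ k) (hk7 : k ≤ 1 / 7) (φ : ℝ) :
    (1:ℝ) / 2 ≤ Real.sqrt (1 - k ^ 2 * Real.sin φ ^ 2) := by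
  have h := arg_ge hk0 hk7 φ
  rw [show (1:ℝ)/2 = Real.sqrt ((1:ℝ)/4) by
    rw [show (1:ℝ)/4 = (1/2)^2 by norm_num, Real.sqrt_sq (by norm_num)]]
  exact Real.sqrt_le_sqrt h

lemma g_le_one (k φ : ℝ) : Real.sqrt (1 - k ^ 2 * Real.sin φ ^ 2) ≤ 1 := by
  rw [Real.sqrt_le_one]
  nlinarith [sq_nonneg (k * Real.sin φ)]

lemma g_intble (k u : ℝ) :
    IntervalIntegrable (fun φ => Real.sqrt (1 - k ^ 2 * Real.sin φ ^ 2))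
      MeasureTheory.volume 0 u :=
  (g_cont k).intervalIntegrable 0 u

lemma ginv_cont (hk0 : 0 ≤ k) (hk7 : k ≤ 1 / 7) :
    Continuous fun φ : ℝ => 1 / Real.sqrt (1 - k ^ 2 * Real.sin φ ^ 2) := by
  apply Continuous.div continuous_const (g_cont k)
  intro φ
  have := g_ge_half hk0 hk7 φ
  positivity

lemma E_nonneg (hk0 : 0 ≤ k) (hu : 0 ≤ u) : 0 ≤ EllE u k :=
  intervalIntegral.integral_nonneg hu fun φ _ => Real.sqrt_nonneg _

lemma E_le (hu : 0 ≤ u) : EllE u k ≤ u := by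
  have h : EllE u k ≤ ∫ _ in (0:ℝ)..u, (1:ℝ) :=
    intervalIntegral.integral_mono_on hu (g_intble k u) intervalIntegrable_const
      fun φ _ => g_le_one k φ
  simpa using h

lemma integral_one_sub_sin_sq (k u : ℝ) :
    ∫ φ in (0:ℝ)..u, (1 - k ^ 2 * Real.sin φ ^ 2) =
      u - k ^ 2 * ((u - Real.sin u * Real.cos u) / 2) := by
  rw [intervalIntegral.integral_sub intervalIntegrable_const
    (Continuous.intervalIntegrable (by continuity) 0 u)]
  rw [intervalIntegral.integral_const_mul, integral_sin_sq]
  simp only [intervalIntegral.integral_const, smul_eq_mul, Real.sin_zero, Real.cos_zero,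
    mul_one, zero_mul, sub_zero, mul_zero]
  ring

lemma E_lb (hk0 : 0 ≤ k) (hk7 : k ≤ 1 / 7) (hu : 0 ≤ u) :
    u - k ^ 2 * ((u - Real.sin u * Real.cos u) / 2) ≤ EllE u k := by
  rw [← integral_one_sub_sin_sq k u]
  apply intervalIntegral.integral_mono_on hu
    (Continuous.intervalIntegrable (by continuity) 0 u) (g_intble k u)
  intro φ _
  have h0 : 0 ≤ 1 - k ^ 2 * Real.sin φ ^ 2 := by linarith [arg_ge hk0 hk7 φ]
  nlinarith [Real.sq_sqrt h0, Real.sqrt_nonneg (1 - k ^ 2 * Real.sin φ ^ 2),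
    g_le_one k φ]

lemma F_ge (hk0 : 0 ≤ k) (hk7 : k ≤ 1 / 7) (hu : 0 ≤ u) : u ≤ EllF u k := by
  have h : (∫ _ in (0:ℝ)..u, (1:ℝ)) ≤ EllF u k := by
    apply intervalIntegral.integral_mono_on hu intervalIntegrable_const
      ((ginv_cont hk0 hk7).intervalIntegrable 0 u)
    intro φ _
    have h1 := g_le_one k φ
    have h2 := g_ge_half hk0 hk7 φ
    rw [le_div_iff₀ (by linarith)]
    linarith
  simpa using h

lemma F_nonpos (hk0 : 0 ≤ k) (hk7 : k ≤ 1 / 7) (hu : u ≤ 0) : EllF u k ≤ 0 := by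
  have h : 0 ≤ ∫ φ in u..(0:ℝ), 1 / Real.sqrt (1 - k ^ 2 * Real.sin φ ^ 2) := by
    apply intervalIntegral.integral_nonneg hu
    intro φ _
    positivity
  rw [EllF, intervalIntegral.integral_symm]
  linarith

lemma D_eq (hk0 : 0 ≤ k) (hk7 : k ≤ 1 / 7) :
    EllE u k - (1 - k ^ 2) * EllF u k =
      ∫ φ in (0:ℝ)..u,
        k ^ 2 * (Real.cos φ ^ 2 / Real.sqrt (1 - k ^ 2 * Real.sin φ ^ 2)) := by
  rw [EllE, EllF, ← intervalIntegral.integral_const_mul,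
    ← intervalIntegral.integral_sub (g_intble k u)
      (Continuous.intervalIntegrable (u := fun φ => (1 - k ^ 2) *
        (1 / Real.sqrt (1 - k ^ 2 * Real.sin φ ^ 2)))
        (continuous_const.mul (ginv_cont hk0 hk7)) 0 u)]
  apply intervalIntegral.integral_congr
  intro φ _
  have h0 : (0:ℝ) < Real.sqrt (1 - k ^ 2 * Real.sin φ ^ 2) := by
    linarith [g_ge_half hk0 hk7 φ]
  have h2 : Real.sqrt (1 - k ^ 2 * Real.sin φ ^ 2) ^ 2 = 1 - k ^ 2 * Real.sin φ ^ 2 :=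
    Real.sq_sqrt (by linarith [arg_ge hk0 hk7 φ])
  have h3 := Real.sin_sq_add_cos_sq φ
  field_simp
  nlinarith [h2, h3]

lemma D_nonneg (hk0 : 0 ≤ k) (hk7 : k ≤ 1 / 7) (hu : 0 ≤ u) :
    0 ≤ EllE u k - (1 - k ^ 2) * EllF u k := by
  rw [D_eq hk0 hk7]
  apply intervalIntegral.integral_nonneg hu
  intro φ _
  positivity

lemma D_le (hk0 : 0 ≤ k) (hk7 : k ≤ 1 / 7) (hu : 0 ≤ u) :
    EllE u k - (1 - k ^ 2) * EllF u k ≤ 2 * k ^ 2 * u := by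
  rw [D_eq hk0 hk7]
  have hcont : Continuous fun φ : ℝ =>
      k ^ 2 * (Real.cos φ ^ 2 / Real.sqrt (1 - k ^ 2 * Real.sin φ ^ 2)) := by
    apply continuous_const.mul
    apply Continuous.div (by continuity) (g_cont k)
    intro φ
    have := g_ge_half hk0 hk7 φ
    exact ne_of_gt (by linarith)
  have h : (∫ φ in (0:ℝ)..u,
      k ^ 2 * (Real.cos φ ^ 2 / Real.sqrt (1 - k ^ 2 * Real.sin φ ^ 2))) ≤
      ∫ _ in (0:ℝ)..u, (2 * k ^ 2 : ℝ) := by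
    apply intervalIntegral.integral_mono_on hu (hcont.intervalIntegrable 0 u)
      intervalIntegrable_const
    intro φ _
    have h1 := g_ge_half hk0 hk7 φ
    have h2 : Real.cos φ ^ 2 ≤ 1 := Real.cos_sq_le_one φ
    have h3 : Real.cos φ ^ 2 / Real.sqrt (1 - k ^ 2 * Real.sin φ ^ 2) ≤ 2 := by
      rw [div_le_iff₀ (by linarith)]
      nlinarith [sq_nonneg (Real.cos φ)]
    nlinarith [sq_nonneg k]
  have h4 : (∫ _ in (0:ℝ)..u, (2 * k ^ 2 : ℝ)) = 2 * k ^ 2 * u := by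
    rw [intervalIntegral.integral_const, smul_eq_mul]
    ring
  linarith

lemma integral_cossq_add (k u : ℝ) :
    ∫ φ in (0:ℝ)..u, (Real.cos φ ^ 2 + k ^ 2 * Real.sin φ ^ 2) =
      (u + Real.sin u * Real.cos u) / 2 + k ^ 2 * ((u - Real.sin u * Real.cos u) / 2) := by
  rw [intervalIntegral.integral_add (Continuous.intervalIntegrable (by continuity) 0 u)
    (Continuous.intervalIntegrable (by continuity) 0 u),
    intervalIntegral.integral_const_mul, integral_cos_sq, integral_sin_sq]
  simp only [Real.sin_zero, Real.cos_zero, mul_one, zero_mul, mul_zero, sub_zero]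
  ring

set_option maxHeartbeats 1000000 in
/-- Key bound: `cos u * (E - (1-k²)F) ≤ k² sin u` on `[0, π/2]`. -/
lemma K1 (hk0 : 0 ≤ k) (hk7 : k ≤ 1 / 7) (hu : 0 ≤ u) (hu2 : u ≤ π / 2) :
    Real.cos u * (EllE u k - (1 - k ^ 2) * EllF u k) ≤ k ^ 2 * Real.sin u := by
  rw [D_eq hk0 hk7]
  set I := ∫ φ in (0:ℝ)..u,
      k ^ 2 * (Real.cos φ ^ 2 / Real.sqrt (1 - k ^ 2 * Real.sin φ ^ 2)) with hIdef
  clear_value I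
  have hC : I ≤
      k ^ 2 * ((u + Real.sin u * Real.cos u) / 2 + k ^ 2 * ((u - Real.sin u * Real.cos u) / 2)) := by
    rw [hIdef, ← integral_cossq_add k u, ← intervalIntegral.integral_const_mul]
    have hcont : Continuous fun φ : ℝ =>
        k ^ 2 * (Real.cos φ ^ 2 / Real.sqrt (1 - k ^ 2 * Real.sin φ ^ 2)) := by
      apply continuous_const.mul
      apply Continuous.div (by continuity) (g_cont k)
      intro φ
      have := g_ge_half hk0 hk7 φ
      exact ne_of_gt (by linarith)
    apply intervalIntegral.integral_mono_on hu (hcont.intervalIntegrable 0 u)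
      (Continuous.intervalIntegrable
        (continuous_const.mul ((Real.continuous_cos.pow 2).add
          (continuous_const.mul (Real.continuous_sin.pow 2)))) 0 u)
    intro φ _
    -- pointwise : cos²/g ≤ cos² + k² sin²
    have hg := g_ge_half hk0 hk7 φ
    have harg := arg_ge hk0 hk7 φ
    have hsq : Real.sqrt (1 - k ^ 2 * Real.sin φ ^ 2) ^ 2 = 1 - k ^ 2 * Real.sin φ ^ 2 :=
      Real.sq_sqrt (by linarith)
    have hx0 : 0 ≤ k ^ 2 * Real.sin φ ^ 2 := by positivity
    have hx1 : k ^ 2 * Real.sin φ ^ 2 ≤ 1 / 49 := by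
      nlinarith [Real.sin_sq_le_one φ, sq_nonneg (Real.sin φ)]
    have hkey : 1 ≤ Real.sqrt (1 - k ^ 2 * Real.sin φ ^ 2) *
        (1 + k ^ 2 * Real.sin φ ^ 2) := by
      have h1 : 1 ≤ (Real.sqrt (1 - k ^ 2 * Real.sin φ ^ 2) *
          (1 + k ^ 2 * Real.sin φ ^ 2)) ^ 2 := by
        rw [mul_pow, hsq]
        nlinarith [mul_nonneg hx0 (by linarith : (0:ℝ) ≤ 1 / 49 - k ^ 2 * Real.sin φ ^ 2),
          mul_nonneg (mul_nonneg hx0 hx0)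
            (by linarith : (0:ℝ) ≤ 1 / 49 - k ^ 2 * Real.sin φ ^ 2)]
      nlinarith [mul_nonneg (Real.sqrt_nonneg (1 - k ^ 2 * Real.sin φ ^ 2))
        (by linarith : (0:ℝ) ≤ 1 + k ^ 2 * Real.sin φ ^ 2)]
    have hdiv : Real.cos φ ^ 2 / Real.sqrt (1 - k ^ 2 * Real.sin φ ^ 2) ≤
        Real.cos φ ^ 2 + k ^ 2 * Real.sin φ ^ 2 := by
      rw [div_le_iff₀ (by linarith)]
      have hcc : Real.cos φ ^ 2 ≤ 1 := Real.cos_sq_le_one φ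
      nlinarith [sq_nonneg (Real.cos φ), sq_nonneg (Real.sin φ), sq_nonneg k, hkey]
    show k ^ 2 * (Real.cos φ ^ 2 / Real.sqrt (1 - k ^ 2 * Real.sin φ ^ 2)) ≤
      k ^ 2 * (Real.cos φ ^ 2 + k ^ 2 * Real.sin φ ^ 2)
    nlinarith [sq_nonneg k]
  -- trig part
  have hT1 := sin_sub_mul_cos hu hu2
  have hT2 := mul_sub_sin_cos hu
  have hc0 : 0 ≤ Real.cos u := Real.cos_nonneg_of_mem_Icc ⟨by linarith [Real.pi_pos], hu2⟩
  have hc1 : Real.cos u ≤ 1 := Real.cos_le_one u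
  have hs0 : 0 ≤ Real.sin u := Real.sin_nonneg_of_nonneg_of_le_pi hu (by linarith [Real.pi_pos])
  have hsu : Real.sin u ≤ u := Real.sin_le hu
  have hpyth := Real.sin_sq_add_cos_sq u
  have hk2 : k ^ 2 ≤ 1 / 49 := by nlinarith
  have husc : 0 ≤ u - Real.sin u * Real.cos u := by nlinarith
  -- cos u * ((u+sc)/2 + k²(u-sc)/2) ≤ sin u
  have htrig : Real.cos u * ((u + Real.sin u * Real.cos u) / 2 +
      k ^ 2 * ((u - Real.sin u * Real.cos u) / 2)) ≤ Real.sin u := by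
    have h1 : Real.cos u * ((u + Real.sin u * Real.cos u) / 2) ≤
        Real.sin u - u ^ 3 / 12 := by
      nlinarith [mul_nonneg hs0 (sq_nonneg (Real.sin u))]
    have h2 : Real.cos u * (k ^ 2 * ((u - Real.sin u * Real.cos u) / 2)) ≤ u ^ 3 / 12 := by
      nlinarith [mul_nonneg hc0 husc, sq_nonneg k]
    nlinarith
  have hfin := mul_le_mul_of_nonneg_left hC hc0
  nlinarith [hfin, sq_nonneg k, htrig]

end Integrals

section Algebra

/-- Pure algebra: negativity of the bracket in the case `0 ≤ cos u`. -/
lemma bracket_neg₁ (k u s c q E D sv2 cv2 : ℝ)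
    (hk2 : k ^ 2 ≤ 1/49)
    (hu0 : 0 < u) (hs0 : 0 < s) (hsu : s ≤ u) (hs2 : u / 2 ≤ s)
    (hT1 : u ^ 3 / 6 ≤ s - u * c)
    (hc0 : 0 ≤ c) (hc1 : c ≤ 1)
    (hq0 : 0 ≤ q) (hq1 : q ≤ 1)
    (hE0 : 0 ≤ E) (hEu : E ≤ u)
    (hK2 : s * c * q ≤ E) (hK1 : c * D ≤ k ^ 2 * s)
    (hD0 : 0 ≤ D) (hD2 : D ≤ 2 * k ^ 2 * u)
    (hveq : sv2 + cv2 = 1) (hsv : 0 ≤ sv2) (hcv : 0 ≤ cv2) :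
    s * c * q * E + s * c * q * D - s ^ 2 + k ^ 2 * s ^ 4
      - k ^ 2 * s ^ 2 * cv2 + E * D * s ^ 2 - E * D * sv2 < 0 := by
  have hu4 : 0 < u ^ 4 := by positivity
  have hm1 : s * c * q * E ≤ s * c * E := by
    have := mul_le_mul_of_nonneg_left hq1 (mul_nonneg (mul_nonneg hs0.le hc0) hE0)
    linarith [this]
  have hm2 : s * c * E ≤ s * c * u := by
    have := mul_le_mul_of_nonneg_left hEu (mul_nonneg hs0.le hc0)
    linarith [this]
  have hm3 : s * c * u - s ^ 2 ≤ -(u ^ 4 / 12) := by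
    have := mul_le_mul hs2 hT1 (by positivity) hs0.le
    linarith [this]
  have hs4 : s ^ 4 ≤ u ^ 4 := pow_le_pow_left₀ hs0.le hsu 4
  have herr1 : k ^ 2 * s ^ 4 ≤ k ^ 2 * u ^ 4 :=
    mul_le_mul_of_nonneg_left hs4 (sq_nonneg k)
  have hED : E * D ≤ u * (2 * k ^ 2 * u) := mul_le_mul hEu hD2 hD0 hu0.le
  have hs2u : s ^ 2 ≤ u ^ 2 := by nlinarith
  have herr2 : E * D * s ^ 2 ≤ 2 * k ^ 2 * u ^ 4 := by
    have h7 : E * D * s ^ 2 ≤ u * (2 * k ^ 2 * u) * u ^ 2 :=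
      mul_le_mul hED hs2u (sq_nonneg s) (by positivity)
    linarith [h7]
  have hfin : k ^ 2 * u ^ 4 ≤ 1/49 * u ^ 4 :=
    mul_le_mul_of_nonneg_right hk2 (by positivity)
  rcases le_total (k ^ 2 * s ^ 2) (E * D) with hmin | hmin
  · have hX : k ^ 2 * s ^ 2 ≤ k ^ 2 * s ^ 2 * cv2 + E * D * sv2 := by
      have h8 := mul_le_mul_of_nonneg_right hmin hsv
      have h9 : k ^ 2 * s ^ 2 * cv2 + k ^ 2 * s ^ 2 * sv2 = k ^ 2 * s ^ 2 := by
        linear_combination (k ^ 2 * s ^ 2) * hveq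
      linarith [h8, h9]
    have hcD : 0 ≤ c * D := mul_nonneg hc0 hD0
    have e1 : s * q * (c * D) ≤ s * (c * D) := by
      have := mul_le_mul_of_nonneg_left hq1 (mul_nonneg hs0.le hcD)
      linarith [this]
    have e2 : s * (c * D) ≤ s * (k ^ 2 * s) := mul_le_mul_of_nonneg_left hK1 hs0.le
    have hb : s * c * q * D ≤ k ^ 2 * s ^ 2 := by linarith [e1, e2]
    linarith [hm1, hm2, hm3, herr1, herr2, hfin, hX, hb]
  · have hX : E * D ≤ k ^ 2 * s ^ 2 * cv2 + E * D * sv2 := by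
      have h8 := mul_le_mul_of_nonneg_right hmin hcv
      have h9 : E * D * cv2 + E * D * sv2 = E * D := by
        linear_combination (E * D) * hveq
      linarith [h8, h9]
    have hb : s * c * q * D ≤ E * D := mul_le_mul_of_nonneg_right hK2 hD0
    linarith [hm1, hm2, hm3, herr1, herr2, hfin, hX, hb]

/-- Small helper: `s c q ≤ E` from the lower bound on `E`. -/
lemma K2_algebra (k u s c q E : ℝ) (hk2 : k ^ 2 ≤ 1/49)
    (hs0 : 0 ≤ s) (hc0 : 0 ≤ c) (hq0 : 0 ≤ q) (hq1 : q ≤ 1)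
    (husc : 0 ≤ u - s * c) (hElb : u - k ^ 2 * ((u - s * c) / 2) ≤ E) :
    s * c * q ≤ E := by
  have h1 : s * c * q ≤ s * c := by
    have := mul_le_mul_of_nonneg_left hq1 (mul_nonneg hs0 hc0)
    linarith [this]
  have h2 : 0 ≤ (u - s * c) * (1 - k ^ 2 / 2) :=
    mul_nonneg husc (by linarith [sq_nonneg k])
  nlinarith [h1, h2]

/-- Pure algebra: negativity of the bracket in the case `cos u ≤ 0`. -/
lemma bracket_neg₂ (k u s c q E D sv2 cv2 : ℝ)
    (hk2 : k ^ 2 ≤ 1/49)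
    (hu0 : 0 < u) (hu315 : u < 3.15)
    (hs0 : 0 < s) (hs1 : s ^ 2 ≤ 1)
    (hcn : c ≤ 0)
    (hq0 : 0 ≤ q)
    (hE0 : 0 ≤ E) (hEu : E ≤ u)
    (hD0 : 0 ≤ D) (hD2 : D ≤ 2 * k ^ 2 * u)
    (hveq : sv2 + cv2 = 1) (hsv : 0 ≤ sv2) (hcv : 0 ≤ cv2) :
    s * c * q * E + s * c * q * D - s ^ 2 + k ^ 2 * s ^ 4
      - k ^ 2 * s ^ 2 * cv2 + E * D * s ^ 2 - E * D * sv2 < 0 := by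
  have h1 : s * c * q * E ≤ 0 := by
    nlinarith [mul_nonneg (mul_nonneg hs0.le hq0) hE0]
  have h2 : s * c * q * D ≤ 0 := by
    nlinarith [mul_nonneg (mul_nonneg hs0.le hq0) hD0]
  have h3 : 0 ≤ k ^ 2 * s ^ 2 * cv2 := by positivity
  have h4 : 0 ≤ E * D * sv2 := mul_nonneg (mul_nonneg hE0 hD0) hsv
  have h5 : k ^ 2 * s ^ 4 ≤ 1/49 * s ^ 2 := by
    have h5a : s ^ 4 ≤ s ^ 2 := by
      nlinarith [mul_nonneg (sq_nonneg s) (sub_nonneg.2 hs1)]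
    have h5b : k ^ 2 * s ^ 4 ≤ 1/49 * s ^ 4 :=
      mul_le_mul_of_nonneg_right hk2 (by positivity)
    nlinarith [h5a, h5b]
  have hED : E * D ≤ u * (2 * k ^ 2 * u) := mul_le_mul hEu hD2 hD0 hu0.le
  have hED20 : E * D ≤ 20 * k ^ 2 := by
    have h7 : 0 ≤ k ^ 2 * ((3.15 - u) * (3.15 + u)) :=
      mul_nonneg (sq_nonneg k) (mul_nonneg (by linarith) (by linarith))
    nlinarith [hED, h7, sq_nonneg k]
  have h6 : E * D * s ^ 2 ≤ 20/49 * s ^ 2 := by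
    have h8 := mul_le_mul_of_nonneg_right hED20 (sq_nonneg s)
    have h9 := mul_le_mul_of_nonneg_right hk2 (sq_nonneg s)
    linarith [h8, h9]
  have hss : 0 < s ^ 2 := by positivity
  linarith [h1, h2, h3, h4, h5, h6, hss]

end Algebra

end J1Aux

set_option maxHeartbeats 1000000 in
/-- There exists `k̂ ∈ (0,1)` such that for all `k ∈ (0,k̂)`, all `u` with
`0 < F(u,k) < π`, and all `v`, the Jacobian numerator `J₁(u,v,k)` is positive. -/
theorem J1_positive_small_k :
    ∃ khat : ℝ, khat ∈ Set.Ioo (0:ℝ) 1 ∧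
      ∀ k : ℝ, k ∈ Set.Ioo (0:ℝ) khat →
        ∀ u : ℝ, 0 < EllF u k → EllF u k < π →
          ∀ v : ℝ, 0 < J₁ u v k := by
  refine ⟨1/7, ⟨by norm_num, by norm_num⟩, ?_⟩
  intro k hk u hF0 hFπ v
  obtain ⟨hk0, hk7⟩ := hk
  have hk0' : (0:ℝ) ≤ k := hk0.le
  have hk7' : k ≤ 1/7 := hk7.le
  have hk2 : k ^ 2 ≤ 1/49 := by nlinarith
  have hu0 : 0 < u := by
    by_contra h
    push_neg at h
    exact absurd hF0 (not_lt.2 (J1Aux.F_nonpos hk0' hk7' h))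
  have huπ : u < π := lt_of_le_of_lt (J1Aux.F_ge hk0' hk7' hu0.le) hFπ
  have hq1 : Real.sqrt (1 - k ^ 2 * Real.sin u ^ 2) ≤ 1 := J1Aux.g_le_one k u
  have hq0 : 0 ≤ Real.sqrt (1 - k ^ 2 * Real.sin u ^ 2) := Real.sqrt_nonneg _
  have hs0 : 0 < Real.sin u := Real.sin_pos_of_pos_of_lt_pi hu0 huπ
  have hsu : Real.sin u ≤ u := Real.sin_le hu0.le
  have hs1 : Real.sin u ^ 2 ≤ 1 := Real.sin_sq_le_one u
  have hc1 : Real.cos u ≤ 1 := Real.cos_le_one u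
  have hE0 : 0 ≤ EllE u k := J1Aux.E_nonneg hk0' hu0.le
  have hEu : EllE u k ≤ u := J1Aux.E_le hu0.le
  have hD0 : 0 ≤ EllE u k - (1 - k ^ 2) * EllF u k := J1Aux.D_nonneg hk0' hk7' hu0.le
  have hD2 : EllE u k - (1 - k ^ 2) * EllF u k ≤ 2 * k ^ 2 * u :=
    J1Aux.D_le hk0' hk7' hu0.le
  have hveq := Real.sin_sq_add_cos_sq v
  have hsv : (0:ℝ) ≤ Real.sin v ^ 2 := sq_nonneg _
  have hcv : (0:ℝ) ≤ Real.cos v ^ 2 := sq_nonneg _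
  have hA : (Real.sin u * Real.cos u * Real.sqrt (1 - k ^ 2 * Real.sin u ^ 2) *
        (2 * EllE u k - (1 - k ^ 2) * EllF u k)) +
      (-(1 - k ^ 2 * Real.sin u ^ 2) * Real.sin u ^ 2 -
        k ^ 2 * Real.sin u ^ 2 * Real.cos v ^ 2) +
      (EllE u k * (Real.sin u ^ 2 - Real.sin v ^ 2) *
        (EllE u k - (1 - k ^ 2) * EllF u k)) < 0 := by
    have hexp : (Real.sin u * Real.cos u * Real.sqrt (1 - k ^ 2 * Real.sin u ^ 2) *
          (2 * EllE u k - (1 - k ^ 2) * EllF u k)) +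
        (-(1 - k ^ 2 * Real.sin u ^ 2) * Real.sin u ^ 2 -
          k ^ 2 * Real.sin u ^ 2 * Real.cos v ^ 2) +
        (EllE u k * (Real.sin u ^ 2 - Real.sin v ^ 2) *
          (EllE u k - (1 - k ^ 2) * EllF u k)) =
        Real.sin u * Real.cos u * Real.sqrt (1 - k ^ 2 * Real.sin u ^ 2) * EllE u k +
          Real.sin u * Real.cos u * Real.sqrt (1 - k ^ 2 * Real.sin u ^ 2) *
            (EllE u k - (1 - k ^ 2) * EllF u k) -
          Real.sin u ^ 2 + k ^ 2 * Real.sin u ^ 4 -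
          k ^ 2 * Real.sin u ^ 2 * Real.cos v ^ 2 +
          EllE u k * (EllE u k - (1 - k ^ 2) * EllF u k) * Real.sin u ^ 2 -
          EllE u k * (EllE u k - (1 - k ^ 2) * EllF u k) * Real.sin v ^ 2 := by
      ring
    rw [hexp]
    rcases le_total u (π / 2) with hcase | hcase
    · -- u ∈ (0, π/2]
      have hc0 : 0 ≤ Real.cos u :=
        Real.cos_nonneg_of_mem_Icc ⟨by linarith [Real.pi_pos], hcase⟩
      have hK1 : Real.cos u * (EllE u k - (1 - k ^ 2) * EllF u k) ≤ k ^ 2 * Real.sin u :=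
        J1Aux.K1 hk0' hk7' hu0.le hcase
      have hT1 : u ^ 3 / 6 ≤ Real.sin u - u * Real.cos u :=
        J1Aux.sin_sub_mul_cos hu0.le hcase
      have hs2 : u / 2 ≤ Real.sin u := J1Aux.sin_ge_half hu0.le hcase
      have hElb : u - k ^ 2 * ((u - Real.sin u * Real.cos u) / 2) ≤ EllE u k :=
        J1Aux.E_lb hk0' hk7' hu0.le
      have husc : 0 ≤ u - Real.sin u * Real.cos u := by
        have := mul_le_mul_of_nonneg_left hc1 hs0.le
        linarith [this, hsu]
      have hK2 : Real.sin u * Real.cos u * Real.sqrt (1 - k ^ 2 * Real.sin u ^ 2) ≤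
          EllE u k :=
        J1Aux.K2_algebra k u (Real.sin u) (Real.cos u)
          (Real.sqrt (1 - k ^ 2 * Real.sin u ^ 2)) (EllE u k)
          hk2 hs0.le hc0 hq0 hq1 husc hElb
      exact J1Aux.bracket_neg₁ k u (Real.sin u) (Real.cos u)
        (Real.sqrt (1 - k ^ 2 * Real.sin u ^ 2)) (EllE u k)
        (EllE u k - (1 - k ^ 2) * EllF u k) (Real.sin v ^ 2) (Real.cos v ^ 2)
        hk2 hu0 hs0 hsu hs2 hT1 hc0 hc1 hq0 hq1 hE0 hEu hK2 hK1 hD0 hD2 hveq hsv hcv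
    · -- u ∈ [π/2, π)
      have hcn : Real.cos u ≤ 0 :=
        Real.cos_nonpos_of_pi_div_two_le_of_le hcase (by linarith [Real.pi_pos])
      have hu315 : u < 3.15 := huπ.trans Real.pi_lt_d2
      exact J1Aux.bracket_neg₂ k u (Real.sin u) (Real.cos u)
        (Real.sqrt (1 - k ^ 2 * Real.sin u ^ 2)) (EllE u k)
        (EllE u k - (1 - k ^ 2) * EllF u k) (Real.sin v ^ 2) (Real.cos v ^ 2)
        hk2 hu0 hu315 hs0 hs1 hcn hq0 hE0 hEu hD0 hD2 hveq hsv hcv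
  have hneg : -4 * k < 0 := by linarith
  rw [J₁]
  exact mul_pos_of_neg_of_neg hneg hA
end

section
/- Let s₁, s₂ ∈ {−1,1}, φ ∈ ℝ, t ∈ ℝ, and set φ_t = φ + t, w = cosh φ, τ = φ + t/2, p = t/2, Δ = cosh²τ + sinh²p. Define x_t = (s₁/2)[(1/w)(φ_t−φ) + w(tanh φ_t − tanh φ)], y_t = (s₂/2)[(1/w)(φ_t−φ) − w(tanh φ_t − tanh φ)], z_t = −s₁s₂·ln(w/cosh φ_t). Then R₁ := y_t·cosh(z_t/2) − x_t·sinh(z_t/2) = s₂·(2p − sinh 2p)/(2√Δ) and R₂ := x_t·cosh(z_t/2) − y_t·sinh(z_t/2) = s₁·(2p + sinh 2p)/(2√Δ). (Identities (3.17)–(3.18): the functions R₁, R₂ along extremal trajectories with λ ∈ C₃.) -/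
open Real

lemma cosh_half_log' (x : ℝ) (hx : 0 < x) :
    Real.cosh (Real.log x / 2) = (Real.sqrt x + (Real.sqrt x)⁻¹)/2 := by
  rw [← Real.log_sqrt hx.le, Real.cosh_log (Real.sqrt_pos.mpr hx)]

lemma sinh_half_log' (x : ℝ) (hx : 0 < x) :
    Real.sinh (Real.log x / 2) = (Real.sqrt x - (Real.sqrt x)⁻¹)/2 := by
  rw [← Real.log_sqrt hx.le, Real.sinh_log (Real.sqrt_pos.mpr hx)]

lemma delta_eq (a b : ℝ) :
    Real.cosh a ^ 2 + Real.sinh b ^ 2 = Real.cosh (a - b) * Real.cosh (a + b) := by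
  rw [Real.cosh_sub, Real.cosh_add]
  nlinarith [Real.cosh_sq_sub_sinh_sq a, Real.cosh_sq_sub_sinh_sq b]

lemma key1 (φ t : ℝ) :
    ((1/Real.cosh φ)*t - Real.cosh φ*(Real.tanh (φ+t) - Real.tanh φ))/2 *
      ((Real.sqrt (Real.cosh φ)/Real.sqrt (Real.cosh (φ+t)) + Real.sqrt (Real.cosh (φ+t))/Real.sqrt (Real.cosh φ))/2)
    + ((1/Real.cosh φ)*t + Real.cosh φ*(Real.tanh (φ+t) - Real.tanh φ))/2 *
      ((Real.sqrt (Real.cosh φ)/Real.sqrt (Real.cosh (φ+t)) - Real.sqrt (Real.cosh (φ+t))/Real.sqrt (Real.cosh φ))/2)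
    = (t - Real.sinh t)/(2*(Real.sqrt (Real.cosh φ)*Real.sqrt (Real.cosh (φ+t)))) := by
  have hca := Real.cosh_pos φ
  have hcb := Real.cosh_pos (φ+t)
  have hu2 : Real.sqrt (Real.cosh φ) ^ 2 = Real.cosh φ := Real.sq_sqrt hca.le
  have hv2 : Real.sqrt (Real.cosh (φ+t)) ^ 2 = Real.cosh (φ+t) := Real.sq_sqrt hcb.le
  have hu : Real.sqrt (Real.cosh φ) ≠ 0 := by positivity
  have hv : Real.sqrt (Real.cosh (φ+t)) ≠ 0 := by positivity
  have hst : Real.sinh t = Real.sinh (φ+t)*Real.cosh φ - Real.cosh (φ+t)*Real.sinh φ := by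
    have h := Real.sinh_sub (φ+t) φ
    have h2 : φ + t - φ = t := by ring
    rw [h2] at h; linarith
  rw [Real.tanh_eq_sinh_div_cosh, Real.tanh_eq_sinh_div_cosh, hst]
  field_simp
  linear_combination (2*t*Real.cosh (φ+t)) * hu2 + (2*Real.cosh (φ+t)*Real.cosh φ*Real.sinh φ - 2*Real.cosh φ^2*Real.sinh (φ+t)) * hv2

lemma key2 (φ t : ℝ) :
    ((1/Real.cosh φ)*t + Real.cosh φ*(Real.tanh (φ+t) - Real.tanh φ))/2 *
      ((Real.sqrt (Real.cosh φ)/Real.sqrt (Real.cosh (φ+t)) + Real.sqrt (Real.cosh (φ+t))/Real.sqrt (Real.cosh φ))/2)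
    + ((1/Real.cosh φ)*t - Real.cosh φ*(Real.tanh (φ+t) - Real.tanh φ))/2 *
      ((Real.sqrt (Real.cosh φ)/Real.sqrt (Real.cosh (φ+t)) - Real.sqrt (Real.cosh (φ+t))/Real.sqrt (Real.cosh φ))/2)
    = (t + Real.sinh t)/(2*(Real.sqrt (Real.cosh φ)*Real.sqrt (Real.cosh (φ+t)))) := by
  have hca := Real.cosh_pos φ
  have hcb := Real.cosh_pos (φ+t)
  have hu2 : Real.sqrt (Real.cosh φ) ^ 2 = Real.cosh φ := Real.sq_sqrt hca.le
  have hv2 : Real.sqrt (Real.cosh (φ+t)) ^ 2 = Real.cosh (φ+t) := Real.sq_sqrt hcb.le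
  have hu : Real.sqrt (Real.cosh φ) ≠ 0 := by positivity
  have hv : Real.sqrt (Real.cosh (φ+t)) ≠ 0 := by positivity
  have hst : Real.sinh t = Real.sinh (φ+t)*Real.cosh φ - Real.cosh (φ+t)*Real.sinh φ := by
    have h := Real.sinh_sub (φ+t) φ
    have h2 : φ + t - φ = t := by ring
    rw [h2] at h; linarith
  rw [Real.tanh_eq_sinh_div_cosh, Real.tanh_eq_sinh_div_cosh, hst]
  field_simp
  linear_combination (2*t*Real.cosh (φ+t)) * hu2 - (2*Real.cosh (φ+t)*Real.cosh φ*Real.sinh φ - 2*Real.cosh φ^2*Real.sinh (φ+t)) * hv2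

/-- Identities (3.17)–(3.18): along extremal trajectories with `λ ∈ C₃` of the
sub-Riemannian problem on SH(2),
`R₁ = y_t cosh(z_t/2) − x_t sinh(z_t/2) = s₂ (2p − sinh 2p)/(2√Δ)` and
`R₂ = x_t cosh(z_t/2) − y_t sinh(z_t/2) = s₁ (2p + sinh 2p)/(2√Δ)`. -/
theorem R1_R2_formulas_C3 (s₁ s₂ : ℝ) (hs₁ : s₁ = -1 ∨ s₁ = 1) (hs₂ : s₂ = -1 ∨ s₂ = 1)
    (φ t : ℝ) :
    let φt : ℝ := φ + t
    let w : ℝ := Real.cosh φ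
    let τ : ℝ := φ + t / 2
    let p : ℝ := t / 2
    let Δ : ℝ := Real.cosh τ ^ 2 + Real.sinh p ^ 2
    let x : ℝ := s₁ / 2 * ((1 / w) * (φt - φ) + w * (Real.tanh φt - Real.tanh φ))
    let y : ℝ := s₂ / 2 * ((1 / w) * (φt - φ) - w * (Real.tanh φt - Real.tanh φ))
    let z : ℝ := -(s₁ * s₂) * Real.log (w / Real.cosh φt)
    (y * Real.cosh (z / 2) - x * Real.sinh (z / 2) =
      s₂ * (2 * p - Real.sinh (2 * p)) / (2 * Real.sqrt Δ)) ∧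
    (x * Real.cosh (z / 2) - y * Real.sinh (z / 2) =
      s₁ * (2 * p + Real.sinh (2 * p)) / (2 * Real.sqrt Δ)) := by
  intro φt w τ p Δ x y z
  have hca := Real.cosh_pos φ
  have hcb := Real.cosh_pos (φ + t)
  have hr : (0:ℝ) < Real.cosh φ / Real.cosh (φ + t) := by positivity
  -- Δ = cosh φ * cosh (φ+t)
  have hΔ : Δ = Real.cosh φ * Real.cosh (φ + t) := by
    show Real.cosh (φ + t/2) ^ 2 + Real.sinh (t/2) ^ 2 = _
    have h := delta_eq (φ + t/2) (t/2)
    rw [show φ + t/2 - t/2 = φ by ring, show φ + t/2 + t/2 = φ + t by ring] at h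
    exact h
  have hsqΔ : Real.sqrt Δ = Real.sqrt (Real.cosh φ) * Real.sqrt (Real.cosh (φ + t)) := by
    rw [hΔ, Real.sqrt_mul hca.le]
  have hsq : Real.sqrt (Real.cosh φ / Real.cosh (φ + t))
      = Real.sqrt (Real.cosh φ) / Real.sqrt (Real.cosh (φ + t)) :=
    Real.sqrt_div hca.le _
  have hsqinv : (Real.sqrt (Real.cosh φ / Real.cosh (φ + t)))⁻¹
      = Real.sqrt (Real.cosh (φ + t)) / Real.sqrt (Real.cosh φ) := by
    rw [hsq, inv_div]
  have hε : s₁ * s₂ = 1 ∨ s₁ * s₂ = -1 := by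
    rcases hs₁ with h|h <;> rcases hs₂ with h'|h' <;> rw [h, h'] <;> norm_num
  have hC : Real.cosh (z / 2)
      = (Real.sqrt (Real.cosh φ)/Real.sqrt (Real.cosh (φ+t))
          + Real.sqrt (Real.cosh (φ+t))/Real.sqrt (Real.cosh φ))/2 := by
    show Real.cosh (-(s₁ * s₂) * Real.log (Real.cosh φ / Real.cosh (φ + t)) / 2) = _
    rcases hε with h|h <;> rw [h]
    · have harg : -(1:ℝ) * Real.log (Real.cosh φ / Real.cosh (φ + t)) / 2
          = -(Real.log (Real.cosh φ / Real.cosh (φ + t)) / 2) := by ring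
      rw [harg, Real.cosh_neg, cosh_half_log' _ hr, hsqinv, hsq]
    · have harg : -(-1:ℝ) * Real.log (Real.cosh φ / Real.cosh (φ + t)) / 2
          = Real.log (Real.cosh φ / Real.cosh (φ + t)) / 2 := by ring
      rw [harg, cosh_half_log' _ hr, hsqinv, hsq]
  have hS : Real.sinh (z / 2)
      = -(s₁ * s₂) * ((Real.sqrt (Real.cosh φ)/Real.sqrt (Real.cosh (φ+t))
          - Real.sqrt (Real.cosh (φ+t))/Real.sqrt (Real.cosh φ))/2) := by
    show Real.sinh (-(s₁ * s₂) * Real.log (Real.cosh φ / Real.cosh (φ + t)) / 2) = _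
    rcases hε with h|h <;> rw [h]
    · have harg : -(1:ℝ) * Real.log (Real.cosh φ / Real.cosh (φ + t)) / 2
          = -(Real.log (Real.cosh φ / Real.cosh (φ + t)) / 2) := by ring
      rw [harg, Real.sinh_neg, sinh_half_log' _ hr, hsqinv, hsq]; ring
    · have harg : -(-1:ℝ) * Real.log (Real.cosh φ / Real.cosh (φ + t)) / 2
          = Real.log (Real.cosh φ / Real.cosh (φ + t)) / 2 := by ring
      rw [harg, sinh_half_log' _ hr, hsqinv, hsq]; ring
  have h2p : 2 * p = t := by show 2 * (t/2) = t; ring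
  have hxd : x = s₁ / 2 * ((1 / Real.cosh φ) * (φ + t - φ)
      + Real.cosh φ * (Real.tanh (φ + t) - Real.tanh φ)) := rfl
  have hyd : y = s₂ / 2 * ((1 / Real.cosh φ) * (φ + t - φ)
      - Real.cosh φ * (Real.tanh (φ + t) - Real.tanh φ)) := rfl
  have hs₁sq : s₁ * s₁ = 1 := by rcases hs₁ with h|h <;> rw [h] <;> norm_num
  have hs₂sq : s₂ * s₂ = 1 := by rcases hs₂ with h|h <;> rw [h] <;> norm_num
  have k1 := key1 φ t
  have k2 := key2 φ t
  constructor
  · rw [hxd, hyd, hC, hS, hsqΔ, h2p]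
    have harg : φ + t - φ = t := by ring
    rw [harg]
    rcases hs₁ with h1|h1 <;> rcases hs₂ with h2|h2 <;> rw [h1, h2] <;>
      first | linear_combination k1 | linear_combination -k1
  · rw [hxd, hyd, hC, hS, hsqΔ, h2p]
    have harg : φ + t - φ = t := by ring
    rw [harg]
    rcases hs₁ with h1|h1 <;> rcases hs₂ with h2|h2 <;> rw [h1, h2] <;>
      first | linear_combination k2 | linear_combination -k2
end

section
/- Let s₁, s₂ ∈ {−1,1}, φ ∈ ℝ, and t > 0, and let (x_t, y_t, z_t) be given by x_t = (s₁/2)[(1/w)(φ_t−φ) + w(tanh φ_t − tanh φ)], y_t = (s₂/2)[(1/w)(φ_t−φ) − w(tanh φ_t − tanh φ)], z_t = −s₁s₂·ln(w/cosh φ_t), where φ_t = φ + t and w = cosh φ. Then y_t·cosh(z_t/2) − x_t·sinh(z_t/2) ≠ 0 and x_t·cosh(z_t/2) − y_t·sinh(z_t/2) ≠ 0. (For λ ∈ C₃ and t > 0 the equations R₁(q_t) = 0 and R₂(q_t) = 0 are impossible, since 2p − sinh 2p < 0 and 2p + sinh 2p > 0 for p = t/2 > 0.) -/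
open Real

lemma aux_K1 (φ t u : ℝ) (ht : 0 < t) (hu : 0 < u)
    (hu2 : u ^ 2 * Real.cosh φ = Real.cosh (φ + t)) :
    ((1 / Real.cosh φ) * t - Real.cosh φ * (Real.tanh (φ + t) - Real.tanh φ)) * ((u + u⁻¹) / 2)
      - ((1 / Real.cosh φ) * t + Real.cosh φ * (Real.tanh (φ + t) - Real.tanh φ)) * ((u - u⁻¹) / 2)
      ≠ 0 := by
  have hw : (0:ℝ) < Real.cosh φ := Real.cosh_pos φ
  have hc : (0:ℝ) < Real.cosh (φ + t) := Real.cosh_pos (φ + t)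
  have hst : t < Real.sinh t := Real.self_lt_sinh_iff.mpr ht
  have hid : Real.sinh (φ + t) * Real.cosh φ - Real.cosh (φ + t) * Real.sinh φ = Real.sinh t := by
    rw [← Real.sinh_sub]; ring_nf
  have hK : ((1 / Real.cosh φ) * t - Real.cosh φ * (Real.tanh (φ + t) - Real.tanh φ)) * ((u + u⁻¹) / 2)
      - ((1 / Real.cosh φ) * t + Real.cosh φ * (Real.tanh (φ + t) - Real.tanh φ)) * ((u - u⁻¹) / 2)
      = (t - Real.sinh t) / (Real.cosh φ * u) := by
    rw [Real.tanh_eq_sinh_div_cosh, Real.tanh_eq_sinh_div_cosh, ← hid]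
    field_simp
    linear_combination (-(2:ℝ) *
      (Real.sinh (φ + t) * Real.cosh φ - Real.cosh (φ + t) * Real.sinh φ)) * hu2
  rw [hK]
  intro h
  rw [div_eq_zero_iff] at h
  rcases h with h | h
  · linarith
  · nlinarith [mul_pos hw hu]

lemma aux_K2 (φ t u : ℝ) (ht : 0 < t) (hu : 0 < u)
    (hu2 : u ^ 2 * Real.cosh φ = Real.cosh (φ + t)) :
    ((1 / Real.cosh φ) * t + Real.cosh φ * (Real.tanh (φ + t) - Real.tanh φ)) * ((u + u⁻¹) / 2)
      - ((1 / Real.cosh φ) * t - Real.cosh φ * (Real.tanh (φ + t) - Real.tanh φ)) * ((u - u⁻¹) / 2)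
      ≠ 0 := by
  have hw : (0:ℝ) < Real.cosh φ := Real.cosh_pos φ
  have hc : (0:ℝ) < Real.cosh (φ + t) := Real.cosh_pos (φ + t)
  have hst : 0 < Real.sinh t := Real.sinh_pos_iff.mpr ht
  have hid : Real.sinh (φ + t) * Real.cosh φ - Real.cosh (φ + t) * Real.sinh φ = Real.sinh t := by
    rw [← Real.sinh_sub]; ring_nf
  have hK : ((1 / Real.cosh φ) * t + Real.cosh φ * (Real.tanh (φ + t) - Real.tanh φ)) * ((u + u⁻¹) / 2)
      - ((1 / Real.cosh φ) * t - Real.cosh φ * (Real.tanh (φ + t) - Real.tanh φ)) * ((u - u⁻¹) / 2)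
      = (t + Real.sinh t) / (Real.cosh φ * u) := by
    rw [Real.tanh_eq_sinh_div_cosh, Real.tanh_eq_sinh_div_cosh, ← hid]
    field_simp
    linear_combination ((2:ℝ) *
      (Real.sinh (φ + t) * Real.cosh φ - Real.cosh (φ + t) * Real.sinh φ)) * hu2
  rw [hK]
  positivity

/-- For `λ ∈ C₃` and `t > 0`, the equations `R₁(q_t) = 0` and `R₂(q_t) = 0` are
impossible along the extremal trajectory `(x_t, y_t, z_t)`. -/
theorem R1_R2_nonzero_C3 (s₁ s₂ : ℝ) (hs₁ : s₁ = -1 ∨ s₁ = 1) (hs₂ : s₂ = -1 ∨ s₂ = 1)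
    (φ t : ℝ) (ht : 0 < t) :
    let φt : ℝ := φ + t
    let w : ℝ := Real.cosh φ
    let x : ℝ := s₁ / 2 * ((1 / w) * (φt - φ) + w * (Real.tanh φt - Real.tanh φ))
    let y : ℝ := s₂ / 2 * ((1 / w) * (φt - φ) - w * (Real.tanh φt - Real.tanh φ))
    let z : ℝ := -(s₁ * s₂) * Real.log (w / Real.cosh φt)
    (y * Real.cosh (z / 2) - x * Real.sinh (z / 2) ≠ 0) ∧
    (x * Real.cosh (z / 2) - y * Real.sinh (z / 2) ≠ 0) := by
  simp only [add_sub_cancel_left]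
  set M := Real.log (Real.cosh φ / Real.cosh (φ + t)) with hM
  set u := Real.exp (-(M / 2)) with hu_def
  have hu : 0 < u := Real.exp_pos _
  have hui : Real.exp (M / 2) = u⁻¹ := by rw [hu_def, Real.exp_neg, inv_inv]
  have hu2 : u ^ 2 * Real.cosh φ = Real.cosh (φ + t) := by
    have h1 : u ^ 2 = Real.exp (-M) := by
      rw [hu_def, sq, ← Real.exp_add]; ring_nf
    rw [h1, Real.exp_neg, hM,
      Real.exp_log (div_pos (Real.cosh_pos φ) (Real.cosh_pos (φ + t)))]
    field_simp
  have hC : Real.cosh (-(M / 2)) = (u + u⁻¹) / 2 := by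
    rw [Real.cosh_eq, neg_neg, hui, ← hu_def]
  have hS : Real.sinh (-(M / 2)) = (u - u⁻¹) / 2 := by
    rw [Real.sinh_eq, neg_neg, hui, ← hu_def]
  have hC' : Real.cosh (M / 2) = (u + u⁻¹) / 2 := by
    rw [← Real.cosh_neg, hC]
  have hS' : Real.sinh (M / 2) = -((u - u⁻¹) / 2) := by
    rw [← neg_neg (M / 2), Real.sinh_neg, hS]
  have k1 := aux_K1 φ t u ht hu hu2
  have k2 := aux_K2 φ t u ht hu hu2
  rcases hs₁ with rfl | rfl <;> rcases hs₂ with rfl | rfl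
  · rw [show -((-1:ℝ) * -1) * M / 2 = -(M / 2) by ring, hC, hS]
    constructor <;> intro h
    · exact k1 (by linear_combination (-2:ℝ) * h)
    · exact k2 (by linear_combination (-2:ℝ) * h)
  · rw [show -((-1:ℝ) * 1) * M / 2 = M / 2 by ring, hC', hS']
    constructor <;> intro h
    · exact k1 (by linear_combination (2:ℝ) * h)
    · exact k2 (by linear_combination (-2:ℝ) * h)
  · rw [show -((1:ℝ) * -1) * M / 2 = M / 2 by ring, hC', hS']
    constructor <;> intro h
    · exact k1 (by linear_combination (-2:ℝ) * h)
    · exact k2 (by linear_combination (2:ℝ) * h)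
  · rw [show -((1:ℝ) * 1) * M / 2 = -(M / 2) by ring, hC, hS]
    constructor <;> intro h
    · exact k1 (by linear_combination (2:ℝ) * h)
    · exact k2 (by linear_combination (2:ℝ) * h)
end

section
/- Let k ∈ (0,1), τ, p ∈ ℝ, and set φ = τ − p, φ_t = τ + p, A = dn(φ_t,k) − k·cn(φ_t,k), B = dn(φ,k) − k·cn(φ,k), Δ = 1 − k²·sn²(p,k)·sn²(τ,k). Then A > 0, B > 0, and with z = ln(A/B) one has cosh(z/2) = 1/√Δ and sinh(z/2) = k·sn(p,k)·sn(τ,k)/√Δ. (Identities (3.3)–(3.4), with s₁ = 1, for the vertical coordinate of extremal trajectories with λ ∈ C₁, obtained from the addition formulas for Jacobi elliptic functions.) -/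
open Real

/-- The Jacobi amplitude `am(·,k)`: the inverse of the strictly increasing bijection
`u ↦ F(u,k)` of `ℝ` onto `ℝ` (for `k ∈ (0,1)`). -/
noncomputable def am (p k : ℝ) : ℝ := Function.invFun (fun u => EllF u k) p

/-- Jacobi elliptic sine `sn(p,k) = sin(am(p,k))`. -/
noncomputable def sn (p k : ℝ) : ℝ := Real.sin (am p k)

/-- Jacobi elliptic cosine `cn(p,k) = cos(am(p,k))`. -/
noncomputable def cn (p k : ℝ) : ℝ := Real.cos (am p k)

/-- Jacobi delta amplitude `dn(p,k) = √(1 − k² sn²(p,k))`. -/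
noncomputable def dn (p k : ℝ) : ℝ := Real.sqrt (1 - k ^ 2 * sn p k ^ 2)

namespace Jac

variable {k : ℝ}

lemma rad_pos (hk0 : 0 < k) (hk1 : k < 1) (u : ℝ) : 0 < 1 - k ^ 2 * Real.sin u ^ 2 := by
  nlinarith [Real.sin_sq_le_one u, sq_nonneg (Real.sin u)]

lemma integrand_cont (hk0 : 0 < k) (hk1 : k < 1) :
    Continuous (fun u : ℝ => 1 / Real.sqrt (1 - k ^ 2 * Real.sin u ^ 2)) := by
  apply Continuous.div continuous_const
  · exact (Real.continuous_sqrt.comp (by continuity))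
  · intro u
    exact ne_of_gt (Real.sqrt_pos.2 (rad_pos hk0 hk1 u))

lemma integrand_ge_one (hk0 : 0 < k) (hk1 : k < 1) (u : ℝ) :
    1 ≤ 1 / Real.sqrt (1 - k ^ 2 * Real.sin u ^ 2) := by
  have h2 : 0 < Real.sqrt (1 - k ^ 2 * Real.sin u ^ 2) := Real.sqrt_pos.2 (rad_pos hk0 hk1 u)
  rw [le_div_iff₀ h2, one_mul]
  exact Real.sqrt_le_one.2 (by nlinarith [sq_nonneg (Real.sin u), sq_nonneg k])

lemma hasDerivAt_EllF (hk0 : 0 < k) (hk1 : k < 1) (u : ℝ) :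
    HasDerivAt (fun u => EllF u k) (1 / Real.sqrt (1 - k ^ 2 * Real.sin u ^ 2)) u :=
  ((integrand_cont hk0 hk1).integral_hasStrictDerivAt 0 u).hasDerivAt

lemma strictMono_EllF (hk0 : 0 < k) (hk1 : k < 1) : StrictMono (fun u => EllF u k) := by
  apply strictMono_of_deriv_pos
  intro u
  rw [(hasDerivAt_EllF hk0 hk1 u).deriv]
  exact div_pos one_pos (Real.sqrt_pos.2 (rad_pos hk0 hk1 u))

lemma self_le_EllF (hk0 : 0 < k) (hk1 : k < 1) {u : ℝ} (hu : 0 ≤ u) : u ≤ EllF u k := by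
  have h := intervalIntegral.integral_mono_on (μ := MeasureTheory.volume) hu
    (intervalIntegrable_const (c := (1:ℝ)))
    (((integrand_cont hk0 hk1)).intervalIntegrable 0 u)
    (fun x _ => integrand_ge_one hk0 hk1 x)
  simpa [EllF] using h

lemma EllF_le_self (hk0 : 0 < k) (hk1 : k < 1) {u : ℝ} (hu : u ≤ 0) : EllF u k ≤ u := by
  have h := intervalIntegral.integral_mono_on (μ := MeasureTheory.volume) hu
    (intervalIntegrable_const (c := (1:ℝ)))
    (((integrand_cont hk0 hk1)).intervalIntegrable u 0)
    (fun x _ => integrand_ge_one hk0 hk1 x)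
  have h2 : EllF u k = -∫ x in u..(0:ℝ), (Real.sqrt (1 - k ^ 2 * Real.sin x ^ 2))⁻¹ := by
    rw [EllF, intervalIntegral.integral_symm]
    simp only [one_div]
  rw [h2]
  simp only [one_div] at h
  simp at h
  linarith

lemma surj_EllF (hk0 : 0 < k) (hk1 : k < 1) : Function.Surjective (fun u => EllF u k) := by
  intro y
  have hc : Continuous (fun u => EllF u k) :=
    continuous_iff_continuousAt.2 fun u => (hasDerivAt_EllF hk0 hk1 u).continuousAt
  set b : ℝ := |y| + 1 with hb
  have hb0 : 0 ≤ b := by positivity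
  have h1 : y ≤ EllF b k := by
    have := self_le_EllF hk0 hk1 hb0
    have : y ≤ b := by
      have := le_abs_self y; simp [hb]; linarith
    linarith [self_le_EllF hk0 hk1 hb0]
  have h2 : EllF (-b) k ≤ y := by
    have h3 : EllF (-b) k ≤ -b := EllF_le_self hk0 hk1 (by linarith)
    have : -b ≤ y := by
      have := neg_abs_le y; simp [hb]; linarith
    linarith
  have := intermediate_value_Icc (by linarith : (-b:ℝ) ≤ b) hc.continuousOn
  obtain ⟨u, _, hu⟩ := this ⟨h2, h1⟩
  exact ⟨u, hu⟩

lemma inj_EllF (hk0 : 0 < k) (hk1 : k < 1) : Function.Injective (fun u => EllF u k) :=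
  (strictMono_EllF hk0 hk1).injective

lemma EllF_am (hk0 : 0 < k) (hk1 : k < 1) (x : ℝ) : EllF (am x k) k = x :=
  Function.rightInverse_invFun (surj_EllF hk0 hk1) x

lemma am_EllF (hk0 : 0 < k) (hk1 : k < 1) (u : ℝ) : am (EllF u k) k = u :=
  Function.leftInverse_invFun (inj_EllF hk0 hk1) u

lemma am_zero (hk0 : 0 < k) (hk1 : k < 1) : am 0 k = 0 := by
  have h0 : EllF 0 k = 0 := by simp [EllF]
  have := am_EllF hk0 hk1 0
  rwa [h0] at this

lemma continuous_am (hk0 : 0 < k) (hk1 : k < 1) : Continuous (fun x => am x k) := by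
  have hiso : (fun x => am x k) =
      ⇑(StrictMono.orderIsoOfSurjective (fun u => EllF u k) (strictMono_EllF hk0 hk1)
        (surj_EllF hk0 hk1)).symm := by
    funext x
    apply inj_EllF hk0 hk1
    show EllF (am x k) k = EllF _ k
    rw [EllF_am hk0 hk1]
    exact (StrictMono.orderIsoOfSurjective_self_symm_apply (fun u => EllF u k)
      (strictMono_EllF hk0 hk1) (surj_EllF hk0 hk1) x).symm
  rw [hiso]
  exact OrderIso.continuous _

lemma dn_pos (hk0 : 0 < k) (hk1 : k < 1) (x : ℝ) : 0 < dn x k :=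
  Real.sqrt_pos.2 (rad_pos hk0 hk1 (am x k))

lemma dn_sq (hk0 : 0 < k) (hk1 : k < 1) (x : ℝ) : dn x k ^ 2 = 1 - k ^ 2 * sn x k ^ 2 :=
  Real.sq_sqrt (le_of_lt (rad_pos hk0 hk1 (am x k)))

lemma sn_sq_add_cn_sq (x : ℝ) : sn x k ^ 2 + cn x k ^ 2 = 1 :=
  Real.sin_sq_add_cos_sq (am x k)

lemma hasDerivAt_am (hk0 : 0 < k) (hk1 : k < 1) (x : ℝ) :
    HasDerivAt (fun x => am x k) (dn x k) x := by
  have h := HasDerivAt.of_local_left_inverse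
    ((continuous_am hk0 hk1).continuousAt (x := x))
    (hasDerivAt_EllF hk0 hk1 (am x k))
    (ne_of_gt (div_pos one_pos (Real.sqrt_pos.2 (rad_pos hk0 hk1 (am x k)))))
    (Filter.Eventually.of_forall (EllF_am hk0 hk1))
  have heq : (1 / Real.sqrt (1 - k ^ 2 * Real.sin (am x k) ^ 2))⁻¹ = dn x k := by
    rw [one_div, inv_inv]; rfl
  rwa [heq] at h

lemma hasDerivAt_sn (hk0 : 0 < k) (hk1 : k < 1) (x : ℝ) :
    HasDerivAt (fun x => sn x k) (cn x k * dn x k) x :=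
  (Real.hasDerivAt_sin (am x k)).comp x (hasDerivAt_am hk0 hk1 x)

lemma hasDerivAt_cn (hk0 : 0 < k) (hk1 : k < 1) (x : ℝ) :
    HasDerivAt (fun x => cn x k) (-(sn x k * dn x k)) x := by
  have := (Real.hasDerivAt_cos (am x k)).comp x (hasDerivAt_am hk0 hk1 x)
  rw [neg_mul] at this
  exact this

lemma hasDerivAt_dn (hk0 : 0 < k) (hk1 : k < 1) (x : ℝ) :
    HasDerivAt (fun x => dn x k) (-(k ^ 2 * sn x k * cn x k)) x := by
  have hg : HasDerivAt (fun x => 1 - k ^ 2 * sn x k ^ 2)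
      (-(k ^ 2 * (2 * sn x k ^ 1 * (cn x k * dn x k)))) x := by
    have := (((hasDerivAt_sn hk0 hk1 x).pow 2).const_mul (k ^ 2)).const_sub 1
    simpa using this
  have hne : 1 - k ^ 2 * sn x k ^ 2 ≠ 0 := ne_of_gt (by
    have := rad_pos hk0 hk1 (am x k); exact this)
  have h := hg.sqrt hne
  have heq : -(k ^ 2 * (2 * sn x k ^ 1 * (cn x k * dn x k))) /
      (2 * Real.sqrt (1 - k ^ 2 * sn x k ^ 2)) = -(k ^ 2 * sn x k * cn x k) := by
    have hd : Real.sqrt (1 - k ^ 2 * sn x k ^ 2) = dn x k := rfl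
    rw [hd]
    field_simp [ne_of_gt (dn_pos hk0 hk1 x)]
  rwa [heq] at h

lemma am_neg (hk0 : 0 < k) (hk1 : k < 1) (x : ℝ) : am (-x) k = -am x k := by
  have hodd : ∀ u, EllF (-u) k = -EllF u k := by
    intro u
    have h1 : (∫ φ in (0:ℝ)..(-u), 1 / Real.sqrt (1 - k ^ 2 * Real.sin φ ^ 2)) =
        ∫ φ in (0:ℝ)..(-u), 1 / Real.sqrt (1 - k ^ 2 * Real.sin (-φ) ^ 2) := by
      simp
    have h2 := intervalIntegral.integral_comp_neg
      (a := (0:ℝ)) (b := -u) (fun φ => 1 / Real.sqrt (1 - k ^ 2 * Real.sin φ ^ 2))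
    rw [EllF, h1, h2]
    simp only [neg_zero, neg_neg]
    rw [intervalIntegral.integral_symm]
    rfl
  apply inj_EllF hk0 hk1
  show EllF (am (-x) k) k = EllF (-am x k) k
  rw [EllF_am hk0 hk1, hodd, EllF_am hk0 hk1]

lemma sn_neg (hk0 : 0 < k) (hk1 : k < 1) (x : ℝ) : sn (-x) k = -sn x k := by
  rw [sn, sn, am_neg hk0 hk1, Real.sin_neg]

lemma cn_neg (hk0 : 0 < k) (hk1 : k < 1) (x : ℝ) : cn (-x) k = cn x k := by
  rw [cn, cn, am_neg hk0 hk1, Real.cos_neg]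

lemma dn_neg (hk0 : 0 < k) (hk1 : k < 1) (x : ℝ) : dn (-x) k = dn x k := by
  rw [dn, dn, sn_neg hk0 hk1]; ring_nf

lemma sn_zero (hk0 : 0 < k) (hk1 : k < 1) : sn 0 k = 0 := by
  rw [sn, am_zero hk0 hk1, Real.sin_zero]

lemma cn_zero (hk0 : 0 < k) (hk1 : k < 1) : cn 0 k = 1 := by
  rw [cn, am_zero hk0 hk1, Real.cos_zero]

lemma dn_zero (hk0 : 0 < k) (hk1 : k < 1) : dn 0 k = 1 := by
  rw [dn, sn_zero hk0 hk1]; simp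



lemma den_pos (hk0 : 0 < k) (hk1 : k < 1) (t s : ℝ) :
    (0:ℝ) < 1 - k ^ 2 * sn t k ^ 2 * sn s k ^ 2 := by
  have h1 : sn t k ^ 2 ≤ 1 := Real.sin_sq_le_one _
  have h2 : sn s k ^ 2 ≤ 1 := Real.sin_sq_le_one _
  have hk2 : k ^ 2 < 1 := by nlinarith
  have e1 : 0 ≤ k ^ 2 * sn t k ^ 2 := by positivity
  have e2 : 0 ≤ sn s k ^ 2 := sq_nonneg _
  nlinarith [mul_nonneg e1 e2]

lemma cn_add_div (hk0 : 0 < k) (hk1 : k < 1) (c t : ℝ) :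
    (cn t k * cn (c - t) k - sn t k * sn (c - t) k * dn t k * dn (c - t) k) /
      (1 - k ^ 2 * sn t k ^ 2 * sn (c - t) k ^ 2) = cn c k := by
  have key : ∀ x : ℝ, HasDerivAt (fun t : ℝ =>
      (cn t k * cn (c - t) k - sn t k * sn (c - t) k * dn t k * dn (c - t) k) /
        (1 - k ^ 2 * sn t k ^ 2 * sn (c - t) k ^ 2)) 0 x := by
    intro x
    have hsub : HasDerivAt (fun t : ℝ => c - t) (-1) x := by
      simpa using (hasDerivAt_id x).const_sub c
    have hs1 := hasDerivAt_sn hk0 hk1 x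
    have hc1 := hasDerivAt_cn hk0 hk1 x
    have hd1 := hasDerivAt_dn hk0 hk1 x
    have hs2 : HasDerivAt (fun t : ℝ => sn (c - t) k)
        (cn (c - x) k * dn (c - x) k * (-1)) x :=
      (hasDerivAt_sn hk0 hk1 (c - x)).comp x hsub
    have hc2 : HasDerivAt (fun t : ℝ => cn (c - t) k)
        (-(sn (c - x) k * dn (c - x) k) * (-1)) x :=
      (hasDerivAt_cn hk0 hk1 (c - x)).comp x hsub
    have hd2 : HasDerivAt (fun t : ℝ => dn (c - t) k)
        (-(k ^ 2 * sn (c - x) k * cn (c - x) k) * (-1)) x :=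
      (hasDerivAt_dn hk0 hk1 (c - x)).comp x hsub
    have hnum := (hc1.mul hc2).sub (((hs1.mul hs2).mul hd1).mul hd2)
    have hden := (((hs1.pow 2).const_mul (k ^ 2)).mul (hs2.pow 2)).const_sub 1
    have hg := hnum.div hden (ne_of_gt (den_pos hk0 hk1 x (c - x)))
    convert hg using 2
    · rfl
    · rfl
    · rfl
    rw [eq_comm, div_eq_zero_iff]
    left
    simp only [Pi.mul_apply, Pi.sub_apply, Pi.pow_apply, Nat.cast_ofNat]
    have e1 : cn x k ^ 2 = 1 - sn x k ^ 2 := by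
      have := sn_sq_add_cn_sq (k := k) x; linarith
    have e2 : dn x k ^ 2 = 1 - k ^ 2 * sn x k ^ 2 := dn_sq hk0 hk1 x
    have e3 : cn (c - x) k ^ 2 = 1 - sn (c - x) k ^ 2 := by
      have := sn_sq_add_cn_sq (k := k) (c - x); linarith
    have e4 : dn (c - x) k ^ 2 = 1 - k ^ 2 * sn (c - x) k ^ 2 := dn_sq hk0 hk1 (c - x)
    linear_combination (2 * k ^ 2 * sn x k * dn x k * sn (c - x) k ^ 2 * cn (c - x) k) * e1 +
      (-(cn x k * sn (c - x) k * dn (c - x) k) -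
        k ^ 2 * sn x k ^ 2 * cn x k * sn (c - x) k ^ 3 * dn (c - x) k) * e2 +
      (-(2 * k ^ 2 * sn x k ^ 2 * cn x k * sn (c - x) k * dn (c - x) k)) * e3 +
      (sn x k * dn x k * cn (c - x) k +
        k ^ 2 * sn x k ^ 3 * dn x k * sn (c - x) k ^ 2 * cn (c - x) k) * e4
  have hconst := is_const_of_deriv_eq_zero (fun x => (key x).differentiableAt)
    (fun x => (key x).deriv) t 0
  rw [hconst]
  simp [sn_zero hk0 hk1, cn_zero hk0 hk1, dn_zero hk0 hk1]

lemma dn_add_div (hk0 : 0 < k) (hk1 : k < 1) (c t : ℝ) :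
    (dn t k * dn (c - t) k - k ^ 2 * sn t k * sn (c - t) k * cn t k * cn (c - t) k) /
      (1 - k ^ 2 * sn t k ^ 2 * sn (c - t) k ^ 2) = dn c k := by
  have key : ∀ x : ℝ, HasDerivAt (fun t : ℝ =>
      (dn t k * dn (c - t) k - k ^ 2 * sn t k * sn (c - t) k * cn t k * cn (c - t) k) /
        (1 - k ^ 2 * sn t k ^ 2 * sn (c - t) k ^ 2)) 0 x := by
    intro x
    have hsub : HasDerivAt (fun t : ℝ => c - t) (-1) x := by
      simpa using (hasDerivAt_id x).const_sub c
    have hs1 := hasDerivAt_sn hk0 hk1 x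
    have hc1 := hasDerivAt_cn hk0 hk1 x
    have hd1 := hasDerivAt_dn hk0 hk1 x
    have hs2 : HasDerivAt (fun t : ℝ => sn (c - t) k)
        (cn (c - x) k * dn (c - x) k * (-1)) x :=
      (hasDerivAt_sn hk0 hk1 (c - x)).comp x hsub
    have hc2 : HasDerivAt (fun t : ℝ => cn (c - t) k)
        (-(sn (c - x) k * dn (c - x) k) * (-1)) x :=
      (hasDerivAt_cn hk0 hk1 (c - x)).comp x hsub
    have hd2 : HasDerivAt (fun t : ℝ => dn (c - t) k)
        (-(k ^ 2 * sn (c - x) k * cn (c - x) k) * (-1)) x :=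
      (hasDerivAt_dn hk0 hk1 (c - x)).comp x hsub
    have hnum := (hd1.mul hd2).sub ((((hs1.const_mul (k ^ 2)).mul hs2).mul hc1).mul hc2)
    have hden := (((hs1.pow 2).const_mul (k ^ 2)).mul (hs2.pow 2)).const_sub 1
    have hg := hnum.div hden (ne_of_gt (den_pos hk0 hk1 x (c - x)))
    convert hg using 2
    · rfl
    · rfl
    · rfl
    rw [eq_comm, div_eq_zero_iff]
    left
    simp only [Pi.mul_apply, Pi.sub_apply, Pi.pow_apply, Nat.cast_ofNat]
    have e1 : cn x k ^ 2 = 1 - sn x k ^ 2 := by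
      have := sn_sq_add_cn_sq (k := k) x; linarith
    have e2 : dn x k ^ 2 = 1 - k ^ 2 * sn x k ^ 2 := dn_sq hk0 hk1 x
    have e3 : cn (c - x) k ^ 2 = 1 - sn (c - x) k ^ 2 := by
      have := sn_sq_add_cn_sq (k := k) (c - x); linarith
    have e4 : dn (c - x) k ^ 2 = 1 - k ^ 2 * sn (c - x) k ^ 2 := dn_sq hk0 hk1 (c - x)
    linear_combination (-(k ^ 2 * dn x k * sn (c - x) k * cn (c - x) k) -
        k ^ 4 * sn x k ^ 2 * dn x k * sn (c - x) k ^ 3 * cn (c - x) k) * e1 +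
      (2 * k ^ 2 * sn x k * cn x k * sn (c - x) k ^ 2 * dn (c - x) k) * e2 +
      (k ^ 2 * sn x k * cn x k * dn (c - x) k +
        k ^ 4 * sn x k ^ 3 * cn x k * sn (c - x) k ^ 2 * dn (c - x) k) * e3 +
      (-(2 * k ^ 2 * sn x k ^ 2 * dn x k * sn (c - x) k * cn (c - x) k)) * e4
  have hconst := is_const_of_deriv_eq_zero (fun x => (key x).differentiableAt)
    (fun x => (key x).deriv) t 0
  rw [hconst]
  simp [sn_zero hk0 hk1, cn_zero hk0 hk1, dn_zero hk0 hk1]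

lemma cn_add (hk0 : 0 < k) (hk1 : k < 1) (u v : ℝ) :
    cn (u + v) k * (1 - k ^ 2 * sn u k ^ 2 * sn v k ^ 2) =
      cn u k * cn v k - sn u k * sn v k * dn u k * dn v k := by
  have h := cn_add_div hk0 hk1 (u + v) u
  rw [show u + v - u = v by ring] at h
  rw [div_eq_iff (ne_of_gt (den_pos hk0 hk1 u v))] at h
  linarith

lemma dn_add (hk0 : 0 < k) (hk1 : k < 1) (u v : ℝ) :
    dn (u + v) k * (1 - k ^ 2 * sn u k ^ 2 * sn v k ^ 2) =
      dn u k * dn v k - k ^ 2 * sn u k * sn v k * cn u k * cn v k := by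
  have h := dn_add_div hk0 hk1 (u + v) u
  rw [show u + v - u = v by ring] at h
  rw [div_eq_iff (ne_of_gt (den_pos hk0 hk1 u v))] at h
  linarith

lemma cn_sub (hk0 : 0 < k) (hk1 : k < 1) (u v : ℝ) :
    cn (u - v) k * (1 - k ^ 2 * sn u k ^ 2 * sn v k ^ 2) =
      cn u k * cn v k + sn u k * sn v k * dn u k * dn v k := by
  have h := cn_add hk0 hk1 u (-v)
  rw [sn_neg hk0 hk1, cn_neg hk0 hk1, dn_neg hk0 hk1, ← sub_eq_add_neg] at h
  linear_combination h

lemma dn_sub (hk0 : 0 < k) (hk1 : k < 1) (u v : ℝ) :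
    dn (u - v) k * (1 - k ^ 2 * sn u k ^ 2 * sn v k ^ 2) =
      dn u k * dn v k + k ^ 2 * sn u k * sn v k * cn u k * cn v k := by
  have h := dn_add hk0 hk1 u (-v)
  rw [sn_neg hk0 hk1, cn_neg hk0 hk1, dn_neg hk0 hk1, ← sub_eq_add_neg] at h
  linear_combination h

lemma k_cn_lt_dn (hk0 : 0 < k) (hk1 : k < 1) (x : ℝ) : k * cn x k < dn x k := by
  have hd := dn_pos hk0 hk1 x
  have hds := dn_sq hk0 hk1 x
  have hsc := sn_sq_add_cn_sq (k := k) x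
  nlinarith [sq_nonneg (cn x k), sq_nonneg (sn x k), mul_pos hk0 hk0]

lemma cosh_sinh_log (w : ℝ) (h1 : 0 < 1 - w) (h2 : 0 < 1 + w) :
    Real.cosh (Real.log ((1 + w) / (1 - w)) / 2) = 1 / Real.sqrt ((1 + w) * (1 - w)) ∧
    Real.sinh (Real.log ((1 + w) / (1 - w)) / 2) = w / Real.sqrt ((1 + w) * (1 - w)) := by
  have hr : 0 < (1 + w) / (1 - w) := div_pos h2 h1
  have he : Real.exp (Real.log ((1 + w) / (1 - w)) / 2) =
      Real.sqrt (1 + w) / Real.sqrt (1 - w) := by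
    have hsq : Real.exp (Real.log ((1 + w) / (1 - w)) / 2) ^ 2 = (1 + w) / (1 - w) := by
      rw [sq, ← Real.exp_add, show Real.log ((1 + w) / (1 - w)) / 2 +
        Real.log ((1 + w) / (1 - w)) / 2 = Real.log ((1 + w) / (1 - w)) by ring,
        Real.exp_log hr]
    rw [← Real.sqrt_sq (Real.exp_pos _).le, hsq, Real.sqrt_div h2.le]
  have s1 : 0 < Real.sqrt (1 + w) := Real.sqrt_pos.2 h2
  have s2 : 0 < Real.sqrt (1 - w) := Real.sqrt_pos.2 h1
  have q1 : Real.sqrt (1 + w) ^ 2 = 1 + w := Real.sq_sqrt h2.le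
  have q2 : Real.sqrt (1 - w) ^ 2 = 1 - w := Real.sq_sqrt h1.le
  constructor
  · rw [Real.cosh_eq, Real.exp_neg, he, Real.sqrt_mul h2.le, inv_div]
    field_simp
    nlinarith [q1, q2, mul_pos s1 s2]
  · rw [Real.sinh_eq, Real.exp_neg, he, Real.sqrt_mul h2.le, inv_div]
    field_simp
    nlinarith [q1, q2, mul_pos s1 s2]

end Jac

/-- Identities (3.3)–(3.4) (with `s₁ = 1`) for the vertical coordinate of extremal
trajectories with `λ ∈ C₁`: with `φ = τ − p`, `φ_t = τ + p`,
`A = dn φ_t − k cn φ_t > 0`, `B = dn φ − k cn φ > 0`,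
`Δ = 1 − k² sn² p sn² τ`, and `z = ln(A/B)`, one has
`cosh(z/2) = 1/√Δ` and `sinh(z/2) = k sn p sn τ/√Δ`. -/
theorem vertical_coordinate_C1 (k τ p : ℝ) (hk : k ∈ Set.Ioo (0:ℝ) 1) :
    let φ : ℝ := τ - p
    let φt : ℝ := τ + p
    let A : ℝ := dn φt k - k * cn φt k
    let B : ℝ := dn φ k - k * cn φ k
    let Δ : ℝ := 1 - k ^ 2 * sn p k ^ 2 * sn τ k ^ 2
    0 < A ∧ 0 < B ∧
    Real.cosh (Real.log (A / B) / 2) = 1 / Real.sqrt Δ ∧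
    Real.sinh (Real.log (A / B) / 2) = k * sn p k * sn τ k / Real.sqrt Δ := by
  obtain ⟨hk0, hk1⟩ := hk
  show 0 < dn (τ + p) k - k * cn (τ + p) k ∧
    0 < dn (τ - p) k - k * cn (τ - p) k ∧
    Real.cosh (Real.log ((dn (τ + p) k - k * cn (τ + p) k) /
      (dn (τ - p) k - k * cn (τ - p) k)) / 2) =
      1 / Real.sqrt (1 - k ^ 2 * sn p k ^ 2 * sn τ k ^ 2) ∧
    Real.sinh (Real.log ((dn (τ + p) k - k * cn (τ + p) k) /
      (dn (τ - p) k - k * cn (τ - p) k)) / 2) =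
      k * sn p k * sn τ k / Real.sqrt (1 - k ^ 2 * sn p k ^ 2 * sn τ k ^ 2)
  have hA : 0 < dn (τ + p) k - k * cn (τ + p) k := sub_pos.2 (Jac.k_cn_lt_dn hk0 hk1 _)
  have hB : 0 < dn (τ - p) k - k * cn (τ - p) k := sub_pos.2 (Jac.k_cn_lt_dn hk0 hk1 _)
  -- bounds on w = k * (sn τ k * sn p k)
  have hsp1 : -1 ≤ sn p k := Real.neg_one_le_sin _
  have hsp2 : sn p k ≤ 1 := Real.sin_le_one _
  have hst1 : -1 ≤ sn τ k := Real.neg_one_le_sin _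
  have hst2 : sn τ k ≤ 1 := Real.sin_le_one _
  have hab1 : sn τ k * sn p k ≤ 1 := by nlinarith
  have hab2 : -1 ≤ sn τ k * sn p k := by nlinarith
  have hw1 : 0 < 1 - k * (sn τ k * sn p k) := by nlinarith
  have hw2 : 0 < 1 + k * (sn τ k * sn p k) := by nlinarith
  have hΔpos : 0 < 1 - k ^ 2 * sn τ k ^ 2 * sn p k ^ 2 := by nlinarith [mul_pos hw1 hw2]
  -- the two product identities
  have hAΔ : (dn (τ + p) k - k * cn (τ + p) k) * (1 - k ^ 2 * sn τ k ^ 2 * sn p k ^ 2) =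
      (dn τ k * dn p k - k * (cn τ k * cn p k)) * (1 + k * (sn τ k * sn p k)) := by
    linear_combination (Jac.dn_add hk0 hk1 τ p) - k * (Jac.cn_add hk0 hk1 τ p)
  have hBΔ : (dn (τ - p) k - k * cn (τ - p) k) * (1 - k ^ 2 * sn τ k ^ 2 * sn p k ^ 2) =
      (dn τ k * dn p k - k * (cn τ k * cn p k)) * (1 - k * (sn τ k * sn p k)) := by
    linear_combination (Jac.dn_sub hk0 hk1 τ p) - k * (Jac.cn_sub hk0 hk1 τ p)
  have hr : (dn (τ + p) k - k * cn (τ + p) k) / (dn (τ - p) k - k * cn (τ - p) k) =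
      (1 + k * (sn τ k * sn p k)) / (1 - k * (sn τ k * sn p k)) := by
    rw [div_eq_div_iff (ne_of_gt hB) (ne_of_gt hw1)]
    apply mul_right_cancel₀ (ne_of_gt hΔpos)
    linear_combination (1 - k * (sn τ k * sn p k)) * hAΔ - (1 + k * (sn τ k * sn p k)) * hBΔ
  have hΔeq : (1 - k ^ 2 * sn p k ^ 2 * sn τ k ^ 2) =
      (1 + k * (sn τ k * sn p k)) * (1 - k * (sn τ k * sn p k)) := by ring
  have hmain := Jac.cosh_sinh_log (k * (sn τ k * sn p k)) hw1 hw2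
  refine ⟨hA, hB, ?_, ?_⟩
  · rw [hr, hΔeq]
    exact hmain.1
  · rw [hr, hΔeq, show k * sn p k * sn τ k = k * (sn τ k * sn p k) by ring]
    exact hmain.2
end
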